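/- arXiv:1601.01981 — 7 statements merged into one kernel-verified Lean document; each statement's English description precedes it below -/
import Mathlib

section
/- Under the stated clustered-model assumptions, let K be the p×r selection matrix with XK = R and let ÿ = (I−H_{S̈})(I−H_T)y for an arbitrary N-vector y. Then the absorption (Frisch–Waugh–Lovell) estimator equals the direct weighted-least-squares coefficient of R: M_R̈ Σ_{i=1}^m R̈_i' W_i ÿ_i = K' M_X Σ_{i=1}^m X_i' W_i y_i. -/
open Matrix MeasureTheory

abbrev Obs {m : ℕ} (n : Fin m → ℕ) : Type := (i : Fin m) × Fin (n i)

/-- The rows of a stacked matrix belonging to cluster `i`. -/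
def cRows {m : ℕ} {n : Fin m → ℕ} {c : Type*} (i : Fin m)
    (M : Matrix (Obs n) c ℝ) : Matrix (Fin (n i)) c ℝ :=
  Matrix.of fun j k => M ⟨i, j⟩ k

/-- The entries of a stacked vector belonging to cluster `i`. -/
def cVec {m : ℕ} {n : Fin m → ℕ} (i : Fin m) (v : Obs n → ℝ) : Fin (n i) → ℝ :=
  fun j => v ⟨i, j⟩

/-- `M_Z = (Zᵀ W Z)⁻¹`. -/
noncomputable def Mmat {Ω q : Type*} [Fintype Ω] [Fintype q] [DecidableEq q]
    (W : Matrix Ω Ω ℝ) (Z : Matrix Ω q ℝ) : Matrix q q ℝ :=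
  (Zᵀ * W * Z)⁻¹

/-- `H_Z = Z M_Z Zᵀ W`. -/
noncomputable def Hmat {Ω q : Type*} [Fintype Ω] [Fintype q] [DecidableEq q]
    (W : Matrix Ω Ω ℝ) (Z : Matrix Ω q ℝ) : Matrix Ω Ω ℝ :=
  Z * Mmat W Z * Zᵀ * W

section Aux

variable {m : ℕ} {n : Fin m → ℕ}

lemma bd_mulVec (Wb : ∀ i : Fin m, Matrix (Fin (n i)) (Fin (n i)) ℝ)
    (x : Obs n → ℝ) (i : Fin m) (j : Fin (n i)) :
    (Matrix.blockDiagonal' Wb *ᵥ x) ⟨i, j⟩ = (Wb i *ᵥ cVec i x) j := by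
  simp only [Matrix.mulVec, dotProduct]
  rw [← Finset.univ_sigma_univ, Finset.sum_sigma]
  rw [Finset.sum_eq_single i]
  · simp [cVec]
  · intro i' _ hne
    apply Finset.sum_eq_zero
    intro j' _
    rw [Matrix.blockDiagonal'_apply_ne _ _ _ (Ne.symm hne), zero_mul]
  · intro h; exact absurd (Finset.mem_univ i) h

lemma cluster_sum {c : Type*} [Fintype c]
    (Wb : ∀ i : Fin m, Matrix (Fin (n i)) (Fin (n i)) ℝ)
    (A : Matrix (Obs n) c ℝ) (v : Obs n → ℝ) :
    ∑ i : Fin m, ((cRows i A)ᵀ * Wb i) *ᵥ cVec i v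
      = (Aᵀ * Matrix.blockDiagonal' Wb) *ᵥ v := by
  funext k
  rw [Finset.sum_apply]
  have key : ∀ i : Fin m, (((cRows i A)ᵀ * Wb i) *ᵥ cVec i v) k
      = ∑ j : Fin (n i), Aᵀ k ⟨i, j⟩ * (Matrix.blockDiagonal' Wb *ᵥ v) ⟨i, j⟩ := by
    intro i
    rw [← Matrix.mulVec_mulVec]
    have hb : ∀ j : Fin (n i),
        (Matrix.blockDiagonal' Wb *ᵥ v) ⟨i, j⟩ = (Wb i *ᵥ cVec i v) j :=
      fun j => bd_mulVec Wb v i j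
    simp only [hb]
    simp [Matrix.mulVec, dotProduct, cRows]
  calc ∑ i : Fin m, (((cRows i A)ᵀ * Wb i) *ᵥ cVec i v) k
      = ∑ i : Fin m, ∑ j : Fin (n i),
          Aᵀ k ⟨i, j⟩ * (Matrix.blockDiagonal' Wb *ᵥ v) ⟨i, j⟩ :=
        Finset.sum_congr rfl fun i _ => key i
    _ = ∑ p : Obs n, Aᵀ k p * (Matrix.blockDiagonal' Wb *ᵥ v) p := by
        rw [← Finset.univ_sigma_univ, Finset.sum_sigma]
    _ = ((Aᵀ * Matrix.blockDiagonal' Wb) *ᵥ v) k := by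
        rw [← Matrix.mulVec_mulVec]; rfl

lemma bd_posDef (Wb : ∀ i : Fin m, Matrix (Fin (n i)) (Fin (n i)) ℝ)
    (hWpd : ∀ i, (Wb i).PosDef) : (Matrix.blockDiagonal' Wb).PosDef := by
  rw [Matrix.posDef_iff_dotProduct_mulVec]
  constructor
  · have h : (fun k => (Wb k)ᴴ) = Wb := funext fun k => (hWpd k).1
    rw [Matrix.IsHermitian, Matrix.blockDiagonal'_conjTranspose, h]
  · intro x hx
    have hq : dotProduct (star x) (Matrix.blockDiagonal' Wb *ᵥ x)
        = ∑ i : Fin m, dotProduct (star (cVec i x)) (Wb i *ᵥ cVec i x) := by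
      simp only [star_trivial, dotProduct]
      rw [← Finset.univ_sigma_univ, Finset.sum_sigma]
      exact Finset.sum_congr rfl fun i _ => Finset.sum_congr rfl fun j _ => by
        rw [bd_mulVec]; rfl
    rw [hq]
    obtain ⟨⟨i0, j0⟩, hp⟩ : ∃ p, x p ≠ 0 := by
      by_contra h; push_neg at h; exact hx (funext h)
    refine Finset.sum_pos' (fun i _ => (hWpd i).posSemidef.dotProduct_mulVec_nonneg (cVec i x))
      ⟨i0, Finset.mem_univ i0, (hWpd i0).dotProduct_mulVec_pos (x := cVec i0 x) ?_⟩
    intro h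
    exact hp (congrFun h j0)

end Aux

section MatAux

variable {Ω q : Type*} [Fintype Ω] [Fintype q] [DecidableEq q]
variable {W : Matrix Ω Ω ℝ} {Z : Matrix Ω q ℝ}

lemma Mmat_mul_self (h : IsUnit (Zᵀ * W * Z).det) :
    Mmat W Z * (Zᵀ * W * Z) = 1 := Matrix.nonsing_inv_mul _ h

lemma self_mul_Mmat (h : IsUnit (Zᵀ * W * Z).det) :
    (Zᵀ * W * Z) * Mmat W Z = 1 := Matrix.mul_nonsing_inv _ h

lemma Hmat_mul_self_arg (h : IsUnit (Zᵀ * W * Z).det) : Hmat W Z * Z = Z := by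
  calc Hmat W Z * Z = Z * (Mmat W Z * (Zᵀ * W * Z)) := by
        unfold Hmat; simp only [Matrix.mul_assoc]
    _ = Z := by rw [Mmat_mul_self h, Matrix.mul_one]

lemma Hmat_idem (h : IsUnit (Zᵀ * W * Z).det) :
    Hmat W Z * Hmat W Z = Hmat W Z := by
  calc Hmat W Z * Hmat W Z = (Hmat W Z * Z) * (Mmat W Z * (Zᵀ * W)) := by
        unfold Hmat; simp only [Matrix.mul_assoc]
    _ = Hmat W Z := by rw [Hmat_mul_self_arg h]; unfold Hmat
                       simp only [Matrix.mul_assoc]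

lemma Mmat_transpose (hWs : Wᵀ = W) : (Mmat W Z)ᵀ = Mmat W Z := by
  unfold Mmat
  rw [Matrix.transpose_nonsing_inv]
  congr 1
  rw [Matrix.transpose_mul, Matrix.transpose_mul, Matrix.transpose_transpose, hWs,
    Matrix.mul_assoc]

lemma Hmat_transpose_mul (hWs : Wᵀ = W) : (Hmat W Z)ᵀ * W = W * Hmat W Z := by
  have hM := Mmat_transpose (W := W) (Z := Z) hWs
  unfold Hmat
  simp only [Matrix.transpose_mul, Matrix.transpose_transpose, hM, hWs, Matrix.mul_assoc]

lemma fullrank_unit (hW : W.PosDef) (Z : Matrix Ω q ℝ)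
    (hZ : ∀ v, Z *ᵥ v = 0 → v = 0) : IsUnit (Zᵀ * W * Z).det := by
  have h1 : Wᵀ = W := by
    rw [← Matrix.conjTranspose_eq_transpose_of_trivial]; exact hW.1
  have hpd : (Zᵀ * W * Z).PosDef := by
    rw [Matrix.posDef_iff_dotProduct_mulVec]
    constructor
    · rw [Matrix.IsHermitian, Matrix.conjTranspose_eq_transpose_of_trivial,
        Matrix.transpose_mul, Matrix.transpose_mul, Matrix.transpose_transpose, h1,
        Matrix.mul_assoc]
    · intro x hx
      have hZx : Z *ᵥ x ≠ 0 := fun h => hx (hZ x h)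
      have hpos := hW.dotProduct_mulVec_pos hZx
      simp only [star_trivial] at hpos ⊢
      have he : dotProduct x ((Zᵀ * W * Z) *ᵥ x)
          = dotProduct (Z *ᵥ x) (W *ᵥ (Z *ᵥ x)) := by
        rw [Matrix.dotProduct_mulVec, ← Matrix.vecMul_vecMul, ← Matrix.vecMul_vecMul,
          Matrix.vecMul_transpose, ← Matrix.dotProduct_mulVec, ← Matrix.dotProduct_mulVec]
      rw [he]; exact hpos
  exact hpd.det_pos.ne'.isUnit

end MatAux

/-- Frisch–Waugh–Lovell / absorption identity: the absorption estimator
equals the `R`-coefficient block of the direct WLS estimator: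
`M_R̈ Σᵢ R̈ᵢᵀ Wᵢ ÿᵢ = Kᵀ M_X Σᵢ Xᵢᵀ Wᵢ yᵢ`. -/
theorem absorption_equals_direct_WLS
    {m r s t : ℕ} {n : Fin m → ℕ}
    (Wb : ∀ i : Fin m, Matrix (Fin (n i)) (Fin (n i)) ℝ)
    (hWpd : ∀ i, (Wb i).PosDef)
    (W : Matrix (Obs n) (Obs n) ℝ) (hW : W = Matrix.blockDiagonal' Wb)
    (R : Matrix (Obs n) (Fin r) ℝ) (S : Matrix (Obs n) (Fin s) ℝ)
    (T : Matrix (Obs n) (Fin t) ℝ)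
    (X : Matrix (Obs n) (Fin r ⊕ (Fin s ⊕ Fin t)) ℝ)
    (hX : X = Matrix.fromCols R (Matrix.fromCols S T))
    (hfullrank : IsUnit (Xᵀ * W * X).det)
    -- the selection matrix K with X K = R
    (K : Matrix (Fin r ⊕ (Fin s ⊕ Fin t)) (Fin r) ℝ) (hK : X * K = R)
    -- absorbed matrices
    (Sd : Matrix (Obs n) (Fin s) ℝ) (hSd : Sd = (1 - Hmat W T) * S)
    (Rd : Matrix (Obs n) (Fin r) ℝ)
    (hRd : Rd = (1 - Hmat W Sd) * ((1 - Hmat W T) * R))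
    -- an arbitrary outcome vector and its absorbed version ÿ = (I−H_S̈)(I−H_T) y
    (y : Obs n → ℝ)
    (yd : Obs n → ℝ) (hyd : yd = ((1 - Hmat W Sd) * (1 - Hmat W T)) *ᵥ y) :
    Mmat W Rd *ᵥ ∑ i : Fin m, ((cRows i Rd)ᵀ * Wb i) *ᵥ cVec i yd
      = (Kᵀ * Mmat W X) *ᵥ ∑ i : Fin m, ((cRows i X)ᵀ * Wb i) *ᵥ cVec i y := by
  have hWPD : W.PosDef := hW ▸ bd_posDef Wb hWpd
  have hWs : Wᵀ = W := by
    rw [← Matrix.conjTranspose_eq_transpose_of_trivial]; exact hWPD.1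
  -- X is injective (full column rank)
  have hXinj : ∀ v, X *ᵥ v = 0 → v = 0 := by
    intro v hv
    have h1 : (Xᵀ * W * X) *ᵥ v = 0 := by
      rw [← Matrix.mulVec_mulVec, hv, Matrix.mulVec_zero]
    have h3 := congrArg (fun u => (Xᵀ * W * X)⁻¹ *ᵥ u) h1
    simp only [Matrix.mulVec_mulVec, Matrix.mulVec_zero] at h3
    rwa [Matrix.nonsing_inv_mul _ hfullrank, Matrix.one_mulVec] at h3
  have hcomp : ∀ (C : Matrix (Fin r ⊕ (Fin s ⊕ Fin t)) (Fin r) ℝ) (v : Fin r → ℝ),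
      (X * C) *ᵥ v = 0 → C *ᵥ v = 0 := by
    intro C v h
    apply hXinj
    rwa [Matrix.mulVec_mulVec]
  have hcomp' : ∀ (C : Matrix (Fin r ⊕ (Fin s ⊕ Fin t)) (Fin s) ℝ) (v : Fin s → ℝ),
      (X * C) *ᵥ v = 0 → C *ᵥ v = 0 := by
    intro C v h
    apply hXinj
    rwa [Matrix.mulVec_mulVec]
  have hcomp'' : ∀ (C : Matrix (Fin r ⊕ (Fin s ⊕ Fin t)) (Fin t) ℝ) (v : Fin t → ℝ),
      (X * C) *ᵥ v = 0 → C *ᵥ v = 0 := by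
    intro C v h
    apply hXinj
    rwa [Matrix.mulVec_mulVec]
  -- T is injective
  have hT_eq : X * (Matrix.fromRows 0 (Matrix.fromRows 0 1) : Matrix (Fin r ⊕ (Fin s ⊕ Fin t)) (Fin t) ℝ) = T := by
    rw [hX, Matrix.fromCols_mul_fromRows, Matrix.fromCols_mul_fromRows]
    simp
  have hTinj : ∀ v, T *ᵥ v = 0 → v = 0 := by
    intro v hv
    have h := hcomp'' _ v (by rwa [hT_eq])
    rw [Matrix.fromRows_mulVec, Matrix.fromRows_mulVec] at h
    funext k
    have := congrFun h (Sum.inr (Sum.inr k))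
    simpa using this
  have hTdet : IsUnit (Tᵀ * W * T).det := fullrank_unit hWPD T hTinj
  -- basic T-projection facts
  have hHT_T : Hmat W T * T = T := Hmat_mul_self_arg hTdet
  have hHT2 : Hmat W T * Hmat W T = Hmat W T := Hmat_idem hTdet
  have hWHT : (Hmat W T)ᵀ * W = W * Hmat W T := Hmat_transpose_mul hWs
  have h1mHT : (1 - Hmat W T) * T = 0 := by
    rw [Matrix.sub_mul, Matrix.one_mul, hHT_T, sub_self]
  -- Sd facts
  have hSdWT : Sdᵀ * W * T = 0 := by
    have h1mH : (1 - Hmat W T)ᵀ * W = W * (1 - Hmat W T) := by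
      rw [Matrix.transpose_sub, Matrix.transpose_one, Matrix.sub_mul, Matrix.mul_sub,
        Matrix.one_mul, Matrix.mul_one, hWHT]
    rw [hSd, Matrix.transpose_mul]
    calc Sᵀ * (1 - Hmat W T)ᵀ * W * T = Sᵀ * ((1 - Hmat W T)ᵀ * W * T) := by
          simp only [Matrix.mul_assoc]
      _ = Sᵀ * (W * ((1 - Hmat W T) * T)) := by
          rw [h1mH]; simp only [Matrix.mul_assoc]
      _ = 0 := by rw [h1mHT, Matrix.mul_zero, Matrix.mul_zero]
  have hSd_eq : X * (Matrix.fromRows 0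
      (Matrix.fromRows 1 (-(Mmat W T * (Tᵀ * W * S)))) : Matrix (Fin r ⊕ (Fin s ⊕ Fin t)) (Fin s) ℝ) = Sd := by
    rw [hX, Matrix.fromCols_mul_fromRows, Matrix.fromCols_mul_fromRows, hSd]
    simp only [Matrix.mul_zero, Matrix.mul_one, zero_add, Matrix.mul_neg, Matrix.sub_mul,
      Matrix.add_mul, Matrix.neg_mul, Matrix.one_mul, Hmat, sub_eq_add_neg,
      Matrix.mul_assoc]
  have hSdinj : ∀ v, Sd *ᵥ v = 0 → v = 0 := by
    intro v hv
    have h := hcomp' _ v (by rwa [hSd_eq])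
    rw [Matrix.fromRows_mulVec, Matrix.fromRows_mulVec] at h
    funext k
    have := congrFun h (Sum.inr (Sum.inl k))
    simpa using this
  have hSddet : IsUnit (Sdᵀ * W * Sd).det := fullrank_unit hWPD Sd hSdinj
  have hHSd2 : Hmat W Sd * Hmat W Sd = Hmat W Sd := Hmat_idem hSddet
  have hHSd_Sd : Hmat W Sd * Sd = Sd := Hmat_mul_self_arg hSddet
  have hWHSd : (Hmat W Sd)ᵀ * W = W * Hmat W Sd := Hmat_transpose_mul hWs
  have hSdWHT : Sdᵀ * W * Hmat W T = 0 := by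
    calc Sdᵀ * W * Hmat W T
        = (Sdᵀ * W * T) * (Mmat W T * (Tᵀ * W)) := by
          unfold Hmat; simp only [Matrix.mul_assoc]
      _ = 0 := by rw [hSdWT, Matrix.zero_mul]
  have hHSd_T : Hmat W Sd * T = 0 := by
    have hsym : Sdᵀ * (W * T) = 0 := by rw [← Matrix.mul_assoc, hSdWT]
    calc Hmat W Sd * T = Sd * (Mmat W Sd * (Sdᵀ * (W * T))) := by
          unfold Hmat; simp only [Matrix.mul_assoc]
      _ = 0 := by rw [hsym, Matrix.mul_zero, Matrix.mul_zero]
  have hHT_Sd : Hmat W T * Sd = 0 := by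
    rw [hSd, ← Matrix.mul_assoc, Matrix.mul_sub, Matrix.mul_one, hHT2, sub_self,
      Matrix.zero_mul]
  have hHT_HSd : Hmat W T * Hmat W Sd = 0 := by
    calc Hmat W T * Hmat W Sd
        = (Hmat W T * Sd) * (Mmat W Sd * (Sdᵀ * W)) := by
          unfold Hmat; simp only [Matrix.mul_assoc]
      _ = 0 := by rw [hHT_Sd, Matrix.zero_mul]
  have hHSd_HT : Hmat W Sd * Hmat W T = 0 := by
    calc Hmat W Sd * Hmat W T
        = Sd * (Mmat W Sd * (Sdᵀ * W * Hmat W T)) := by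
          unfold Hmat; simp only [Matrix.mul_assoc]
      _ = 0 := by rw [hSdWHT, Matrix.mul_zero, Matrix.mul_zero]
  have hSdWS : Sdᵀ * W * S = Sdᵀ * W * Sd := by
    have hS : S = Sd + Hmat W T * S := by
      rw [hSd, Matrix.sub_mul, Matrix.one_mul, sub_add_cancel]
    conv_lhs => rw [hS]
    rw [Matrix.mul_add]
    have hz : Sdᵀ * W * (Hmat W T * S) = 0 := by
      calc Sdᵀ * W * (Hmat W T * S) = (Sdᵀ * W * Hmat W T) * S := by
            simp only [Matrix.mul_assoc]
        _ = 0 := by rw [hSdWHT, Matrix.zero_mul]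
    rw [hz, add_zero]
  have hHSd_S : Hmat W Sd * S = Sd := by
    calc Hmat W Sd * S = Sd * (Mmat W Sd * (Sdᵀ * W * S)) := by
          unfold Hmat; simp only [Matrix.mul_assoc]
      _ = Sd * (Mmat W Sd * (Sdᵀ * W * Sd)) := by rw [hSdWS]
      _ = Sd * (Mmat W Sd * (Sdᵀ * W * Sd)) := rfl
      _ = Sd := by rw [Mmat_mul_self hSddet, Matrix.mul_one]
  -- the combined annihilator Pm
  set Pm : Matrix (Obs n) (Obs n) ℝ := 1 - Hmat W T - Hmat W Sd with hPm
  have hPfact : (1 - Hmat W Sd) * (1 - Hmat W T) = Pm := by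
    rw [hPm]
    simp only [Matrix.sub_mul, Matrix.mul_sub, Matrix.one_mul, Matrix.mul_one, hHSd_HT,
      sub_zero]
    abel
  have hPmPm : Pm * Pm = Pm := by
    rw [hPm]
    simp only [Matrix.sub_mul, Matrix.mul_sub, Matrix.one_mul, Matrix.mul_one, hHT2, hHSd2,
      hHT_HSd, hHSd_HT, sub_zero]
    abel
  have hPmtW : Pmᵀ * W = W * Pm := by
    rw [hPm]
    simp only [Matrix.transpose_sub, Matrix.transpose_one, Matrix.sub_mul, Matrix.mul_sub,
      Matrix.one_mul, Matrix.mul_one, hWHT, hWHSd]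
  have hPmT : Pm * T = 0 := by
    rw [hPm]
    simp only [Matrix.sub_mul, Matrix.one_mul, hHT_T, hHSd_T, sub_self, sub_zero]
  have hPmS : Pm * S = 0 := by
    rw [hPm]
    simp only [Matrix.sub_mul, Matrix.one_mul, hHSd_S]
    rw [hSd, Matrix.sub_mul, Matrix.one_mul]
    abel
  have hRdPm : Rd = Pm * R := by
    rw [hRd, ← Matrix.mul_assoc, hPfact]
  have hRdtW : Rdᵀ * W = Rᵀ * W * Pm := by
    rw [hRdPm, Matrix.transpose_mul, Matrix.mul_assoc, hPmtW, ← Matrix.mul_assoc]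
  have hRdWS : Rdᵀ * W * S = 0 := by
    rw [hRdtW, Matrix.mul_assoc _ Pm S, hPmS, Matrix.mul_zero]
  have hRdWT : Rdᵀ * W * T = 0 := by
    rw [hRdtW, Matrix.mul_assoc _ Pm T, hPmT, Matrix.mul_zero]
  have hRdWPm : Rdᵀ * W * Pm = Rdᵀ * W := by
    rw [hRdtW, Matrix.mul_assoc _ Pm Pm, hPmPm]
  have hRdWR : Rdᵀ * W * R = Rdᵀ * W * Rd := by
    calc Rdᵀ * W * R = (Rdᵀ * W * Pm) * R := by rw [hRdWPm]
      _ = Rdᵀ * W * (Pm * R) := by rw [Matrix.mul_assoc]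
      _ = Rdᵀ * W * Rd := by rw [← hRdPm]
  -- Rd is injective: Rd = X * C with identity top block
  obtain ⟨C, hC, hCtop⟩ : ∃ C : Matrix (Fin r ⊕ (Fin s ⊕ Fin t)) (Fin r) ℝ,
      X * C = Rd ∧ ∀ v : Fin r → ℝ, C *ᵥ v = 0 → v = 0 := by
    refine ⟨Matrix.fromRows 1 (Matrix.fromRows
        (-(Mmat W Sd * (Sdᵀ * W * ((1 - Hmat W T) * R))))
        (-(Mmat W T * (Tᵀ * W * R) - Mmat W T * (Tᵀ * W * S) *
            (Mmat W Sd * (Sdᵀ * W * ((1 - Hmat W T) * R)))))), ?_, ?_⟩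
    · rw [hX, Matrix.fromCols_mul_fromRows, Matrix.fromCols_mul_fromRows, hRd, hSd]
      simp only [Hmat, Matrix.mul_sub, Matrix.sub_mul, Matrix.mul_one, Matrix.one_mul,
        Matrix.mul_zero, zero_add, add_zero, Matrix.mul_neg, Matrix.neg_mul, neg_sub,
        sub_eq_add_neg, neg_add_rev, neg_neg, Matrix.mul_add, Matrix.add_mul,
        Matrix.mul_assoc]
      abel
    · intro v hv
      rw [Matrix.fromRows_mulVec] at hv
      funext k
      have := congrFun hv (Sum.inl k)
      simpa using this
  have hRdinj : ∀ v, Rd *ᵥ v = 0 → v = 0 := by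
    intro v hv
    exact hCtop v (hcomp C v (by rwa [hC]))
  have hRddet : IsUnit (Rdᵀ * W * Rd).det := fullrank_unit hWPD Rd hRdinj
  have hMRd : Mmat W Rd * (Rdᵀ * W * Rd) = 1 := Mmat_mul_self hRddet
  have hXMX : Xᵀ * W * X * Mmat W X = 1 := self_mul_Mmat hfullrank
  -- the selection matrix is unique
  have hK0 : X * (Matrix.fromRows 1 0 : Matrix (Fin r ⊕ (Fin s ⊕ Fin t)) (Fin r) ℝ) = R := by
    rw [hX, Matrix.fromCols_mul_fromRows]
    simp
  have hKval : K = Matrix.fromRows 1 0 := by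
    have h1 : (Xᵀ * W * X) * K = (Xᵀ * W * X) * (Matrix.fromRows 1 0 : Matrix (Fin r ⊕ (Fin s ⊕ Fin t)) (Fin r) ℝ) := by
      calc (Xᵀ * W * X) * K = Xᵀ * W * (X * K) := by simp only [Matrix.mul_assoc]
        _ = Xᵀ * W * (X * (Matrix.fromRows 1 0 : Matrix (Fin r ⊕ (Fin s ⊕ Fin t)) (Fin r) ℝ)) := by rw [hK, hK0]
        _ = (Xᵀ * W * X) * (Matrix.fromRows 1 0 : Matrix (Fin r ⊕ (Fin s ⊕ Fin t)) (Fin r) ℝ) := by simp only [Matrix.mul_assoc]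
    have h2 := congrArg (fun M => (Xᵀ * W * X)⁻¹ * M) h1
    simpa only [← Matrix.mul_assoc, Matrix.nonsing_inv_mul _ hfullrank,
      Matrix.one_mul] using h2
  -- the key normal-equation identity
  have hRdWX : Rdᵀ * W * X = (Rdᵀ * W * Rd) * Kᵀ := by
    have h00 : (Matrix.fromCols (0 : Matrix (Fin r) (Fin s) ℝ)
        (0 : Matrix (Fin r) (Fin t) ℝ)) = 0 := Matrix.fromCols_zero
    rw [hKval, Matrix.transpose_fromRows, Matrix.transpose_one, Matrix.transpose_zero,
      Matrix.mul_fromCols, Matrix.mul_one, Matrix.mul_zero, hX,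
      Matrix.mul_fromCols, Matrix.mul_fromCols, hRdWS, hRdWT, hRdWR, h00]
  have hRdWHX : Rdᵀ * W * Hmat W X = Rdᵀ * W := by
    conv_lhs => rw [← hC]
    conv_rhs => rw [← hC]
    rw [Matrix.transpose_mul]
    calc Cᵀ * Xᵀ * W * Hmat W X
        = Cᵀ * ((Xᵀ * W * X * Mmat W X) * (Xᵀ * W)) := by
          unfold Hmat; simp only [Matrix.mul_assoc]
      _ = Cᵀ * Xᵀ * W := by rw [hXMX, Matrix.one_mul, Matrix.mul_assoc]
  have hmain : Mmat W Rd * (Rdᵀ * W) * Pm = Kᵀ * Mmat W X * (Xᵀ * W) := by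
    have h1 : (Rdᵀ * W * Rd) * (Kᵀ * (Mmat W X * (Xᵀ * W))) = Rdᵀ * W := by
      calc (Rdᵀ * W * Rd) * (Kᵀ * (Mmat W X * (Xᵀ * W)))
          = ((Rdᵀ * W * Rd) * Kᵀ) * (Mmat W X * (Xᵀ * W)) := by
            simp only [Matrix.mul_assoc]
        _ = (Rdᵀ * W * X) * (Mmat W X * (Xᵀ * W)) := by rw [hRdWX]
        _ = Rdᵀ * W * Hmat W X := by unfold Hmat; simp only [Matrix.mul_assoc]
        _ = Rdᵀ * W := hRdWHX
    calc Mmat W Rd * (Rdᵀ * W) * Pm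
        = Mmat W Rd * (Rdᵀ * W * Pm) := by simp only [Matrix.mul_assoc]
      _ = Mmat W Rd * (Rdᵀ * W) := by rw [hRdWPm]
      _ = Mmat W Rd * ((Rdᵀ * W * Rd) * (Kᵀ * (Mmat W X * (Xᵀ * W)))) := by rw [h1]
      _ = (Mmat W Rd * (Rdᵀ * W * Rd)) * (Kᵀ * (Mmat W X * (Xᵀ * W))) := by
          simp only [Matrix.mul_assoc]
      _ = Kᵀ * Mmat W X * (Xᵀ * W) := by
          rw [hMRd, Matrix.one_mul]; simp only [Matrix.mul_assoc]
  -- assemble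
  rw [cluster_sum Wb Rd yd, cluster_sum Wb X y, ← hW, hyd, hPfact]
  simp only [Matrix.mulVec_mulVec]
  have := congrArg (fun M => M *ᵥ y) hmain
  simp only [Matrix.mul_assoc] at this ⊢
  exact this
end

section
/- Under the stated clustered-model assumptions, the residual projection matrix factors as (I − H_X) = (I − H_{R̈})(I − H_{S̈})(I − H_T), where X = [R S T], S̈ = (I−H_T)S, and R̈ = (I−H_{S̈})(I−H_T)R. -/
open Matrix MeasureTheory

namespace FWLaux

variable {n q q₂ : Type*} [Fintype n] [DecidableEq n] [Fintype q] [DecidableEq q]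
  [Fintype q₂] [DecidableEq q₂]

lemma H_fix {W : Matrix n n ℝ} {Z : Matrix n q ℝ} (hZ : IsUnit (Zᵀ * W * Z).det) :
    Hmat W Z * Z = Z := by
  have h : Hmat W Z * Z = Z * ((Zᵀ * W * Z)⁻¹ * (Zᵀ * W * Z)) := by
    simp only [Hmat, Mmat, Matrix.mul_assoc]
  rw [h, Matrix.nonsing_inv_mul _ hZ, Matrix.mul_one]

lemma tWH {W : Matrix n n ℝ} {Z : Matrix n q ℝ} (hZ : IsUnit (Zᵀ * W * Z).det) :
    Zᵀ * W * Hmat W Z = Zᵀ * W := by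
  have h : Zᵀ * W * Hmat W Z = (Zᵀ * W * Z) * ((Zᵀ * W * Z)⁻¹ * (Zᵀ * W)) := by
    simp only [Hmat, Mmat, Matrix.mul_assoc]
  rw [h, Matrix.mul_nonsing_inv_cancel_left _ _ hZ]

lemma H_killL {W : Matrix n n ℝ} {Z₁ : Matrix n q ℝ} {Z₂ : Matrix n q₂ ℝ}
    (h : Z₁ᵀ * W * Z₂ = 0) : Hmat W Z₁ * Z₂ = 0 := by
  have h2 : Hmat W Z₁ * Z₂ = Z₁ * (Mmat W Z₁ * (Z₁ᵀ * W * Z₂)) := by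
    simp only [Hmat, Matrix.mul_assoc]
  rw [h2, h, Matrix.mul_zero, Matrix.mul_zero]

lemma killR {W : Matrix n n ℝ} {Z : Matrix n q ℝ} {K : Matrix q₂ n ℝ}
    (h : K * Z = 0) : K * Hmat W Z = 0 := by
  have h2 : K * Hmat W Z = (K * Z) * (Mmat W Z * Zᵀ * W) := by
    simp only [Hmat, Matrix.mul_assoc]
  rw [h2, h, Matrix.zero_mul]

lemma fix_H {W : Matrix n n ℝ} {Z : Matrix n q ℝ} {K : Matrix n n ℝ}
    (h : K * Z = Z) : K * Hmat W Z = Hmat W Z := by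
  have h2 : K * Hmat W Z = (K * Z) * (Mmat W Z * Zᵀ * W) := by
    simp only [Hmat, Matrix.mul_assoc]
  rw [h2, h]
  simp only [Hmat, Matrix.mul_assoc]

lemma H_orth {W : Matrix n n ℝ} {Z₁ : Matrix n q ℝ} {Z₂ : Matrix n q₂ ℝ}
    (h : Z₁ᵀ * W * Z₂ = 0) : Hmat W Z₁ * Hmat W Z₂ = 0 :=
  killR (H_killL h)

lemma WH_symm {W : Matrix n n ℝ} (hWs : Wᵀ = W) (Z : Matrix n q ℝ) :
    (W * Hmat W Z)ᵀ = W * Hmat W Z := by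
  simp [Hmat, Mmat, Matrix.transpose_mul, Matrix.transpose_nonsing_inv,
    Matrix.transpose_transpose, hWs, Matrix.mul_assoc]

lemma orth_symm {W : Matrix n n ℝ} (hWs : Wᵀ = W) {Z₁ : Matrix n q ℝ} {Z₂ : Matrix n q₂ ℝ}
    (h : Z₁ᵀ * W * Z₂ = 0) : Z₂ᵀ * W * Z₁ = 0 := by
  have h2 := congrArg Matrix.transpose h
  simpa [Matrix.transpose_mul, Matrix.transpose_transpose, hWs, Matrix.mul_assoc] using h2

lemma gram_unit {W : Matrix n n ℝ} (hW : W.PosDef) {Z : Matrix n q ℝ}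
    (hker : ∀ v, Z *ᵥ v = 0 → v = 0) : IsUnit (Zᵀ * W * Z).det := by
  have hpd : (Zᵀ * W * Z).PosDef := by
    refine Matrix.PosDef.of_dotProduct_mulVec_pos ?_ ?_
    · have h1 := (hW.posSemidef.conjTranspose_mul_mul_same Z).isHermitian
      rwa [Matrix.conjTranspose_eq_transpose_of_trivial] at h1
    · intro x hx
      have hz : Z *ᵥ x ≠ 0 := fun h => hx (hker x h)
      have h2 := hW.dotProduct_mulVec_pos hz
      simpa only [star_trivial, ← Matrix.mulVec_mulVec, Matrix.dotProduct_mulVec,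
        Matrix.vecMul_transpose] using h2
  exact (Matrix.isUnit_iff_isUnit_det _).mp hpd.isUnit

end FWLaux

open FWLaux in
/-- the residual projection factors as
`I − H_X = (I − H_R̈)(I − H_S̈)(I − H_T)` where `X = [R S T]`, `S̈ = (I−H_T)S`, and
`R̈ = (I−H_S̈)(I−H_T)R`. -/
theorem residual_projection_factorization
    {N r s t : ℕ}
    (W : Matrix (Fin N) (Fin N) ℝ) (hWpd : W.PosDef)
    (R : Matrix (Fin N) (Fin r) ℝ) (S : Matrix (Fin N) (Fin s) ℝ)
    (T : Matrix (Fin N) (Fin t) ℝ)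
    (X : Matrix (Fin N) (Fin r ⊕ (Fin s ⊕ Fin t)) ℝ)
    (hX : X = Matrix.fromCols R (Matrix.fromCols S T))
    (hfullrank : IsUnit (Xᵀ * W * X).det)
    (Sd : Matrix (Fin N) (Fin s) ℝ) (hSd : Sd = (1 - Hmat W T) * S)
    (Rd : Matrix (Fin N) (Fin r) ℝ)
    (hRd : Rd = (1 - Hmat W Sd) * ((1 - Hmat W T) * R)) :
    1 - Hmat W X = (1 - Hmat W Rd) * (1 - Hmat W Sd) * (1 - Hmat W T) := by
  have hWs : Wᵀ = W := by
    rw [← Matrix.conjTranspose_eq_transpose_of_trivial]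
    exact hWpd.1
  -- kernel of X is trivial
  have hXker : ∀ v, X *ᵥ v = 0 → v = 0 := by
    intro v hv
    have h1 : (Xᵀ * W * X) *ᵥ v = 0 := by
      rw [← Matrix.mulVec_mulVec, ← Matrix.mulVec_mulVec, hv, Matrix.mulVec_zero,
        Matrix.mulVec_zero]
    calc v = ((Xᵀ * W * X)⁻¹ * (Xᵀ * W * X)) *ᵥ v := by
            rw [Matrix.nonsing_inv_mul _ hfullrank, Matrix.one_mulVec]
      _ = (Xᵀ * W * X)⁻¹ *ᵥ ((Xᵀ * W * X) *ᵥ v) := (Matrix.mulVec_mulVec _ _ _).symm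
      _ = 0 := by rw [h1, Matrix.mulVec_zero]
  -- explicit decompositions
  obtain ⟨A, hSdA⟩ : ∃ A, Sd = S - T * A :=
    ⟨Mmat W T * (Tᵀ * (W * S)), by
      rw [hSd]; simp only [Hmat, Matrix.sub_mul, Matrix.one_mul, Matrix.mul_assoc]⟩
  obtain ⟨B, D, hRdec⟩ : ∃ B D, Rd = R - T * B - Sd * D :=
    ⟨Mmat W T * (Tᵀ * (W * R)), Mmat W Sd * (Sdᵀ * (W * ((1 - Hmat W T) * R))), by
      rw [hRd]
      simp only [Hmat, Matrix.sub_mul, Matrix.mul_sub, Matrix.one_mul, Matrix.mul_one,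
        Matrix.mul_assoc]
      abel⟩
  have hRdSD : Rd = R - S * D - T * (B - A * D) := by
    rw [hRdec, hSdA]
    simp only [Matrix.sub_mul, Matrix.mul_sub, Matrix.mul_assoc]
    abel
  have hS : S = Sd + T * A := by rw [hSdA]; abel
  have hR : R = Rd + Sd * D + T * B := by rw [hRdec]; abel
  -- kernels
  have hTker : ∀ v, T *ᵥ v = 0 → v = 0 := by
    intro v hv
    have h2 : X *ᵥ (Sum.elim (0 : Fin r → ℝ) (Sum.elim (0 : Fin s → ℝ) v)) = T *ᵥ v := by
      rw [hX, Matrix.fromCols_mulVec_sumElim, Matrix.fromCols_mulVec_sumElim,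
        Matrix.mulVec_zero, Matrix.mulVec_zero, zero_add, zero_add]
    have h3 := hXker _ (h2.trans hv)
    funext j
    exact congrFun h3 (Sum.inr (Sum.inr j))
  have hSdker : ∀ v, Sd *ᵥ v = 0 → v = 0 := by
    intro v hv
    have h2 : X *ᵥ (Sum.elim (0 : Fin r → ℝ) (Sum.elim v (-(A *ᵥ v)))) = Sd *ᵥ v := by
      rw [hX, Matrix.fromCols_mulVec_sumElim, Matrix.fromCols_mulVec_sumElim,
        Matrix.mulVec_zero, Matrix.mulVec_neg, Matrix.mulVec_mulVec, hSdA,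
        Matrix.sub_mulVec]
      abel
    have h3 := hXker _ (h2.trans hv)
    funext j
    exact congrFun h3 (Sum.inr (Sum.inl j))
  have hRdker : ∀ v, Rd *ᵥ v = 0 → v = 0 := by
    intro v hv
    have h2 : X *ᵥ (Sum.elim v (Sum.elim (-(D *ᵥ v)) (-((B - A * D) *ᵥ v)))) = Rd *ᵥ v := by
      rw [hX, Matrix.fromCols_mulVec_sumElim, Matrix.fromCols_mulVec_sumElim,
        Matrix.mulVec_neg, Matrix.mulVec_neg, Matrix.mulVec_mulVec, Matrix.mulVec_mulVec,
        hRdSD, Matrix.sub_mulVec, Matrix.sub_mulVec]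
      abel
    have h3 := hXker _ (h2.trans hv)
    funext j
    exact congrFun h3 (Sum.inl j)
  -- Gram matrices are units
  have hTu : IsUnit (Tᵀ * W * T).det := gram_unit hWpd hTker
  have hSdu : IsUnit (Sdᵀ * W * Sd).det := gram_unit hWpd hSdker
  have hRdu : IsUnit (Rdᵀ * W * Rd).det := gram_unit hWpd hRdker
  -- orthogonality relations
  have oTS : Tᵀ * W * Sd = 0 := by
    rw [hSd, ← Matrix.mul_assoc, Matrix.mul_sub, Matrix.mul_one, tWH hTu, sub_self,
      Matrix.zero_mul]
  have oTR : Tᵀ * W * Rd = 0 := by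
    have c1 : Tᵀ * W * (1 - Hmat W Sd) = Tᵀ * W := by
      rw [Matrix.mul_sub, Matrix.mul_one, killR oTS, sub_zero]
    have c2 : Tᵀ * W * (1 - Hmat W T) = 0 := by
      rw [Matrix.mul_sub, Matrix.mul_one, tWH hTu, sub_self]
    rw [hRd, ← Matrix.mul_assoc, c1, ← Matrix.mul_assoc, c2, Matrix.zero_mul]
  have oSR : Sdᵀ * W * Rd = 0 := by
    have c3 : Sdᵀ * W * (1 - Hmat W Sd) = 0 := by
      rw [Matrix.mul_sub, Matrix.mul_one, tWH hSdu, sub_self]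
    rw [hRd, ← Matrix.mul_assoc, c3, Matrix.zero_mul]
  have oST : Sdᵀ * W * T = 0 := orth_symm hWs oTS
  have oRT : Rdᵀ * W * T = 0 := orth_symm hWs oTR
  have oRS : Rdᵀ * W * Sd = 0 := orth_symm hWs oSR
  -- H X fixes the columns of R, S, T
  have HXX : Hmat W X * X = X := H_fix hfullrank
  have hXT : X * (Matrix.fromRows (0 : Matrix (Fin r) (Fin t) ℝ)
      (Matrix.fromRows (0 : Matrix (Fin s) (Fin t) ℝ) (1 : Matrix (Fin t) (Fin t) ℝ))) = T := by
    rw [hX, Matrix.fromCols_mul_fromRows, Matrix.fromCols_mul_fromRows]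
    simp
  have hXS : X * (Matrix.fromRows (0 : Matrix (Fin r) (Fin s) ℝ)
      (Matrix.fromRows (1 : Matrix (Fin s) (Fin s) ℝ) (0 : Matrix (Fin t) (Fin s) ℝ))) = S := by
    rw [hX, Matrix.fromCols_mul_fromRows, Matrix.fromCols_mul_fromRows]
    simp
  have hXR : X * (Matrix.fromRows (1 : Matrix (Fin r) (Fin r) ℝ)
      (Matrix.fromRows (0 : Matrix (Fin s) (Fin r) ℝ) (0 : Matrix (Fin t) (Fin r) ℝ))) = R := by
    rw [hX, Matrix.fromCols_mul_fromRows, Matrix.fromCols_mul_fromRows]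
    simp
  have HXT : Hmat W X * T = T := by rw [← hXT, ← Matrix.mul_assoc, HXX]
  have HXS : Hmat W X * S = S := by rw [← hXS, ← Matrix.mul_assoc, HXX]
  have HXR : Hmat W X * R = R := by rw [← hXR, ← Matrix.mul_assoc, HXX]
  have HXSd : Hmat W X * Sd = Sd := by
    rw [hSdA, Matrix.mul_sub, HXS, ← Matrix.mul_assoc, HXT]
  have HXRd : Hmat W X * Rd = Rd := by
    rw [hRdSD, Matrix.mul_sub, Matrix.mul_sub, HXR]
    simp only [← Matrix.mul_assoc]
    rw [HXS, HXT]
  -- P := H_T + H_Sd + H_Rd reproduces the columns of X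
  have e1 : Hmat W T * S = T * A := by
    rw [hS, Matrix.mul_add, H_killL oTS, ← Matrix.mul_assoc, H_fix hTu, zero_add]
  have e2 : Hmat W Sd * S = Sd := by
    rw [hS, Matrix.mul_add, H_fix hSdu, ← Matrix.mul_assoc, H_killL oST, Matrix.zero_mul,
      add_zero]
  have e3 : Hmat W Rd * S = 0 := by
    rw [hS, Matrix.mul_add, H_killL oRS, ← Matrix.mul_assoc, H_killL oRT, Matrix.zero_mul,
      add_zero]
  have f1 : Hmat W T * R = T * B := by
    rw [hR, Matrix.mul_add, Matrix.mul_add, H_killL oTR, ← Matrix.mul_assoc (Hmat W T) Sd D,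
      H_killL oTS, Matrix.zero_mul, ← Matrix.mul_assoc (Hmat W T) T B, H_fix hTu,
      zero_add, zero_add]
  have f2 : Hmat W Sd * R = Sd * D := by
    rw [hR, Matrix.mul_add, Matrix.mul_add, H_killL oSR, ← Matrix.mul_assoc (Hmat W Sd) Sd D,
      H_fix hSdu, ← Matrix.mul_assoc (Hmat W Sd) T B, H_killL oST, Matrix.zero_mul,
      zero_add, add_zero]
  have f3 : Hmat W Rd * R = Rd := by
    rw [hR, Matrix.mul_add, Matrix.mul_add, H_fix hRdu, ← Matrix.mul_assoc (Hmat W Rd) Sd D,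
      H_killL oRS, Matrix.zero_mul, ← Matrix.mul_assoc (Hmat W Rd) T B, H_killL oRT,
      Matrix.zero_mul, add_zero, add_zero]
  have PT : (Hmat W T + Hmat W Sd + Hmat W Rd) * T = T := by
    rw [Matrix.add_mul, Matrix.add_mul, H_fix hTu, H_killL oST, H_killL oRT, add_zero,
      add_zero]
  have PS : (Hmat W T + Hmat W Sd + Hmat W Rd) * S = S := by
    rw [Matrix.add_mul, Matrix.add_mul, e1, e2, e3, add_zero, hS]
    abel
  have PR : (Hmat W T + Hmat W Sd + Hmat W Rd) * R = R := by
    rw [Matrix.add_mul, Matrix.add_mul, f1, f2, f3, hR]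
    abel
  have PX : (Hmat W T + Hmat W Sd + Hmat W Rd) * X = X := by
    rw [hX, Matrix.mul_fromCols, Matrix.mul_fromCols, PR, PS, PT]
  have PHX : (Hmat W T + Hmat W Sd + Hmat W Rd) * Hmat W X = Hmat W X := fix_H PX
  have HXP : Hmat W X * (Hmat W T + Hmat W Sd + Hmat W Rd)
      = Hmat W T + Hmat W Sd + Hmat W Rd := by
    rw [Matrix.mul_add, Matrix.mul_add, fix_H HXT, fix_H HXSd, fix_H HXRd]
  -- symmetry argument
  have sHX : (W * Hmat W X)ᵀ = W * Hmat W X := WH_symm hWs X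
  have sP : (W * (Hmat W T + Hmat W Sd + Hmat W Rd))ᵀ
      = W * (Hmat W T + Hmat W Sd + Hmat W Rd) := by
    rw [Matrix.mul_add, Matrix.mul_add, Matrix.transpose_add, Matrix.transpose_add,
      WH_symm hWs T, WH_symm hWs Sd, WH_symm hWs Rd]
  have key : W * Hmat W X = W * (Hmat W T + Hmat W Sd + Hmat W Rd) := by
    calc W * Hmat W X
        = W * ((Hmat W T + Hmat W Sd + Hmat W Rd) * Hmat W X) := by rw [PHX]
      _ = (W * (Hmat W T + Hmat W Sd + Hmat W Rd)) * Hmat W X := by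
          rw [Matrix.mul_assoc]
      _ = (W * (Hmat W T + Hmat W Sd + Hmat W Rd))ᵀ * Hmat W X := by rw [sP]
      _ = (Hmat W T + Hmat W Sd + Hmat W Rd)ᵀ * (W * Hmat W X) := by
          rw [Matrix.transpose_mul, hWs, Matrix.mul_assoc]
      _ = (Hmat W T + Hmat W Sd + Hmat W Rd)ᵀ * (W * Hmat W X)ᵀ := by rw [sHX]
      _ = (Hmat W T + Hmat W Sd + Hmat W Rd)ᵀ * ((Hmat W X)ᵀ * Wᵀ) := by
          rw [Matrix.transpose_mul]
      _ = (Hmat W X * (Hmat W T + Hmat W Sd + Hmat W Rd))ᵀ * W := by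
          rw [hWs, ← Matrix.mul_assoc, ← Matrix.transpose_mul]
      _ = (Hmat W T + Hmat W Sd + Hmat W Rd)ᵀ * W := by rw [HXP]
      _ = (W * (Hmat W T + Hmat W Sd + Hmat W Rd))ᵀ := by
          rw [Matrix.transpose_mul, hWs]
      _ = W * (Hmat W T + Hmat W Sd + Hmat W Rd) := sP
  have hWdet : IsUnit W.det := isUnit_iff_ne_zero.mpr (ne_of_gt hWpd.det_pos)
  have hHXP : Hmat W X = Hmat W T + Hmat W Sd + Hmat W Rd := by
    have h := congrArg (fun M => W⁻¹ * M) key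
    simpa [Matrix.nonsing_inv_mul_cancel_left _ _ hWdet] using h
  have zST : Hmat W Sd * Hmat W T = 0 := H_orth oST
  have zRS : Hmat W Rd * Hmat W Sd = 0 := H_orth oRS
  have zRT : Hmat W Rd * Hmat W T = 0 := H_orth oRT
  have expand : (1 - Hmat W Rd) * (1 - Hmat W Sd) * (1 - Hmat W T)
      = 1 - (Hmat W T + Hmat W Sd + Hmat W Rd)
        + (Hmat W Sd * Hmat W T + Hmat W Rd * Hmat W Sd + Hmat W Rd * Hmat W T)
        - Hmat W Rd * (Hmat W Sd * Hmat W T) := by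
    noncomm_ring
  rw [hHXP, expand, zST, zRS, zRT, Matrix.mul_zero]
  simp
end

section
/- Under the stated clustered-model assumptions, let D_i be invertible with D_i'D_i = Φ_i, B_i = D_i (I−H_X)_i Φ (I−H_X)_i' D_i', and A_i = D_i' B_i^{+1/2} D_i. If B_i is invertible, then A_i satisfies the original bias-reduced-linearization criterion: A_i (I−H_X)_i Φ (I−H_X)_i' A_i' = Φ_i. -/
open Matrix MeasureTheory

/-- if `B_i` is invertible then `A_i = D_iᵀ B_i^{+1/2} D_i` satisfies the
original bias-reduced-linearization criterion
`A_i (I−H_X)_i Φ (I−H_X)_iᵀ A_iᵀ = Φ_i`. -/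
theorem cr2_original_criterion_of_invertible
    {m p : ℕ} {n : Fin m → ℕ}
    (Wb : ∀ i : Fin m, Matrix (Fin (n i)) (Fin (n i)) ℝ)
    (hWpd : ∀ i, (Wb i).PosDef)
    (W : Matrix (Obs n) (Obs n) ℝ) (hW : W = Matrix.blockDiagonal' Wb)
    (Φb : ∀ i : Fin m, Matrix (Fin (n i)) (Fin (n i)) ℝ)
    (hΦpd : ∀ i, (Φb i).PosDef)
    (Φ : Matrix (Obs n) (Obs n) ℝ) (hΦ : Φ = Matrix.blockDiagonal' Φb)
    (X : Matrix (Obs n) (Fin p) ℝ)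
    (hfullrank : IsUnit (Xᵀ * W * X).det)
    (D : ∀ i : Fin m, Matrix (Fin (n i)) (Fin (n i)) ℝ)
    (hDinv : ∀ i, IsUnit (D i).det)
    (hDD : ∀ i, (D i)ᵀ * D i = Φb i)
    (B : ∀ i : Fin m, Matrix (Fin (n i)) (Fin (n i)) ℝ)
    (hB : ∀ i, B i = D i * cRows i (1 - Hmat W X) * Φ *
        (cRows i (1 - Hmat W X))ᵀ * (D i)ᵀ)
    (Bp : ∀ i : Fin m, Matrix (Fin (n i)) (Fin (n i)) ℝ)
    (hBp1 : ∀ i, B i * Bp i * B i = B i)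
    (hBp2 : ∀ i, Bp i * B i * Bp i = Bp i)
    (hBp3 : ∀ i, (B i * Bp i)ᵀ = B i * Bp i)
    (hBp4 : ∀ i, (Bp i * B i)ᵀ = Bp i * B i)
    (Bh : ∀ i : Fin m, Matrix (Fin (n i)) (Fin (n i)) ℝ)
    (hBh1 : ∀ i, (Bh i).PosSemidef)
    (hBh2 : ∀ i, Bh i * Bh i = Bp i)
    (A : ∀ i : Fin m, Matrix (Fin (n i)) (Fin (n i)) ℝ)
    (hA : ∀ i, A i = (D i)ᵀ * Bh i * D i) :
    ∀ i : Fin m, IsUnit (B i).det →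
      A i * cRows i (1 - Hmat W X) * Φ * (cRows i (1 - Hmat W X))ᵀ * (A i)ᵀ = Φb i := by
  intro i hBi
  have hsym : (Bh i)ᵀ = Bh i := by
    have := (hBh1 i).1
    simpa [Matrix.IsHermitian, Matrix.conjTranspose_eq_transpose_of_trivial] using this
  have hBpB : Bp i * B i = 1 := by
    have h2 : (B i)⁻¹ * (B i * Bp i * B i) = (B i)⁻¹ * B i := by rw [hBp1 i]
    rw [Matrix.mul_assoc (B i) (Bp i) (B i)] at h2
    rwa [Matrix.nonsing_inv_mul_cancel_left _ _ hBi, Matrix.nonsing_inv_mul _ hBi] at h2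
  have hBBp : B i * Bp i = 1 := by
    have h2 : B i * Bp i * B i * (B i)⁻¹ = B i * (B i)⁻¹ := by rw [hBp1 i]
    rwa [Matrix.mul_nonsing_inv _ hBi, Matrix.mul_assoc, Matrix.mul_nonsing_inv _ hBi,
      Matrix.mul_one] at h2
  have hbhdet : IsUnit (Bh i).det := by
    have h1 : IsUnit ((Bh i).det * (Bh i).det) := by
      rw [← Matrix.det_mul, hBh2 i]
      exact IsUnit.of_mul_eq_one _ (by rw [← Matrix.det_mul, hBpB, Matrix.det_one])
    exact isUnit_of_mul_isUnit_left h1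
  have hkey : Bh i * B i * Bh i = 1 := by
    have h1 : Bh i * (B i * (Bh i * Bh i)) = Bh i := by rw [hBh2 i, hBBp, Matrix.mul_one]
    have h2 : Bh i * B i * Bh i * Bh i = Bh i := by simpa only [Matrix.mul_assoc] using h1
    have h3 : Bh i * B i * Bh i * Bh i * (Bh i)⁻¹ = Bh i * (Bh i)⁻¹ := by rw [h2]
    rwa [Matrix.mul_assoc (Bh i * B i * Bh i), Matrix.mul_nonsing_inv _ hbhdet,
      Matrix.mul_one] at h3
  rw [hA i]
  rw [show ((D i)ᵀ * Bh i * D i)ᵀ = (D i)ᵀ * Bh i * D i by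
    rw [Matrix.transpose_mul, Matrix.transpose_mul, Matrix.transpose_transpose, hsym,
      ← Matrix.mul_assoc]]
  have hmain : (D i)ᵀ * Bh i * D i * cRows i (1 - Hmat W X) * Φ * (cRows i (1 - Hmat W X))ᵀ *
      ((D i)ᵀ * Bh i * D i) = (D i)ᵀ * (Bh i * (B i * (Bh i * D i))) := by
    rw [hB i]; simp only [Matrix.mul_assoc]
  rw [hmain, show Bh i * (B i * (Bh i * D i)) = Bh i * B i * Bh i * D i by
    simp only [Matrix.mul_assoc], hkey, Matrix.one_mul, hDD i]
end

section
/- Under the stated clustered-model assumptions with identity working model and identity weights (Φ = I and W = I), suppose the within-cluster fixed effects are nested (T_h T_k' = 0 for h ≠ k) and L_i = Ü'Ü − Ü_i'Ü_i is invertible for each i. Then the adjustment matrices A_i = (I_i − Ü_i (Ü'Ü)^{-1} Ü_i')^{+1/2} satisfy the CR2 criterion: R̈_i' A_i (I−H_X)_i (I−H_X)_i' A_i' R̈_i = R̈_i' R̈_i for every i. -/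
open Matrix MeasureTheory

namespace CR2Aux

lemma Hmat_one {Ω q : Type*} [Fintype Ω] [Fintype q] [DecidableEq Ω] [DecidableEq q]
    (Z : Matrix Ω q ℝ) : Hmat 1 Z = Z * (Zᵀ * Z)⁻¹ * Zᵀ := by
  simp [Hmat, Mmat, Matrix.mul_one]

/-- A real matrix with `B * Bᵀ = 0` is zero. -/
lemma eq_zero_of_mul_transpose_self {p q : Type*} [Fintype q] (B : Matrix p q ℝ)
    (h : B * Bᵀ = 0) : B = 0 := by
  ext j k
  have h1 : (B * Bᵀ) j j = 0 := by rw [h]; rfl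
  rw [Matrix.mul_apply] at h1
  have h2 : ∀ l ∈ Finset.univ, (0:ℝ) ≤ B j l * Bᵀ l j := by
    intro l _; rw [Matrix.transpose_apply]; exact mul_self_nonneg _
  have h3 := (Finset.sum_eq_zero_iff_of_nonneg h2).mp h1 k (Finset.mem_univ k)
  rw [Matrix.transpose_apply] at h3
  simpa [Matrix.zero_apply] using mul_self_eq_zero.mp h3

/-- A symmetric idempotent real matrix with zero trace is zero. -/
lemma eq_zero_of_symm_idem_trace_zero {p : Type*} [Fintype p] (E : Matrix p p ℝ)
    (hs : Eᵀ = E) (hi : E * E = E) (ht : E.trace = 0) : E = 0 := by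
  apply eq_zero_of_mul_transpose_self
  rw [hs, hi]
  ext j k
  have h1 : ∀ l ∈ Finset.univ, (0:ℝ) ≤ (E * Eᵀ) l l := by
    intro l _
    rw [Matrix.mul_apply]
    exact Finset.sum_nonneg fun o _ => by rw [Matrix.transpose_apply]; exact mul_self_nonneg _
  have h2 : ∑ l, (E * Eᵀ) l l = 0 := by
    have : E * Eᵀ = E := by rw [hs, hi]
    rw [this]; exact ht
  have h3 := (Finset.sum_eq_zero_iff_of_nonneg h1).mp h2
  -- each diagonal entry of E * Eᵀ is zero, hence each row of E is zero
  have h4 : (E * Eᵀ) j j = 0 := h3 j (Finset.mem_univ j)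
  rw [Matrix.mul_apply] at h4
  have h5 : ∀ l ∈ Finset.univ, (0:ℝ) ≤ E j l * Eᵀ l j := by
    intro l _; rw [Matrix.transpose_apply]; exact mul_self_nonneg _
  have h6 := (Finset.sum_eq_zero_iff_of_nonneg h5).mp h4 k (Finset.mem_univ k)
  rw [Matrix.transpose_apply] at h6
  simpa [Matrix.zero_apply] using mul_self_eq_zero.mp h6

/-- If `A` is psd and `A * B = -B` then `B = 0`. -/
lemma eq_zero_of_posSemidef_neg {p q : Type*} [Fintype p] (A : Matrix p p ℝ)
    (hA : A.PosSemidef) (B : Matrix p q ℝ) (h : A * B = -B) : B = 0 := by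
  ext j k
  set x : p → ℝ := fun l => B l k with hx
  have hAx : A *ᵥ x = -x := by
    ext l
    have : (A * B) l k = (-B) l k := by rw [h]
    simpa [Matrix.mul_apply, Matrix.mulVec, Matrix.neg_apply, dotProduct, hx] using this
  have h1 : (0:ℝ) ≤ x ⬝ᵥ (A *ᵥ x) := by simpa [star_trivial] using hA.dotProduct_mulVec_nonneg x
  rw [hAx, dotProduct_neg] at h1
  have h2 : x ⬝ᵥ x = 0 := le_antisymm (by linarith) (by
    exact Finset.sum_nonneg fun o _ => mul_self_nonneg _)
  have h3 := dotProduct_self_eq_zero.mp h2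
  simpa [Matrix.zero_apply, hx] using congrFun h3 j

lemma isUnit_det_transpose_mul_self {Ω q : Type*} [Fintype Ω] [Fintype q] [DecidableEq q]
    (Z : Matrix Ω q ℝ) (hZ : ∀ v, Z *ᵥ v = 0 → v = 0) : IsUnit (Zᵀ * Z).det := by
  have hpd : (Zᵀ * Z).PosDef := by
    refine Matrix.PosDef.of_dotProduct_mulVec_pos ?_ ?_
    · rw [← Matrix.conjTranspose_eq_transpose_of_trivial]
      exact Matrix.isHermitian_conjTranspose_mul_self Z
    · intro x hx
      have hZx : Z *ᵥ x ≠ 0 := fun h => hx (hZ x h)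
      have he : star x ⬝ᵥ (Zᵀ * Z) *ᵥ x = (Z *ᵥ x) ⬝ᵥ (Z *ᵥ x) := by
        rw [star_trivial, ← Matrix.mulVec_mulVec, Matrix.dotProduct_mulVec,
          Matrix.vecMul_transpose]
      rw [he]
      rcases lt_or_eq_of_le (Finset.sum_nonneg fun o _ =>
        mul_self_nonneg ((Z *ᵥ x) o) : (0:ℝ) ≤ (Z *ᵥ x) ⬝ᵥ (Z *ᵥ x)) with h | h
      · exact h
      · exact absurd (dotProduct_self_eq_zero.mp h.symm) hZx
  exact hpd.det_pos.ne'.isUnit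

variable {m : ℕ} {n : Fin m → ℕ}

/-- The `(i,i)` diagonal block of an `N × N` matrix. -/
def blk (i : Fin m) (M : Matrix (Obs n) (Obs n) ℝ) :
    Matrix (Fin (n i)) (Fin (n i)) ℝ := Matrix.of fun j k => M ⟨i, j⟩ ⟨i, k⟩

lemma cRows_mul {c d : Type*} [Fintype c] (i : Fin m)
    (M : Matrix (Obs n) c ℝ) (N : Matrix c d ℝ) :
    cRows i (M * N) = cRows i M * N := by
  ext j k; simp [cRows, Matrix.mul_apply]

lemma cRows_mul_transpose_cRows {c : Type*} [Fintype c] (i : Fin m)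
    (M N : Matrix (Obs n) c ℝ) :
    cRows i M * (cRows i N)ᵀ = blk i (M * Nᵀ) := by
  ext j k; simp [cRows, blk, Matrix.mul_apply]

lemma blk_one (i : Fin m) : blk i (1 : Matrix (Obs n) (Obs n) ℝ) = 1 := by
  ext j k
  simp only [blk, Matrix.of_apply, Matrix.one_apply]
  congr 1
  apply propext
  constructor
  · intro h; exact eq_of_heq (Sigma.mk.inj_iff.mp h).2
  · intro h; rw [h]

lemma blk_add (i : Fin m) (M N : Matrix (Obs n) (Obs n) ℝ) :
    blk i (M + N) = blk i M + blk i N := by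
  ext j k; simp [blk]

lemma blk_sub (i : Fin m) (M N : Matrix (Obs n) (Obs n) ℝ) :
    blk i (M - N) = blk i M - blk i N := by
  ext j k; simp [blk]

lemma transpose_mul_eq_sum {c d : Type*} [Fintype c] [Fintype d]
    (M : Matrix (Obs n) c ℝ) (N : Matrix (Obs n) d ℝ) :
    Mᵀ * N = ∑ l, (cRows l M)ᵀ * cRows l N := by
  ext a b
  rw [Matrix.sum_apply, Matrix.mul_apply]
  rw [show (Finset.univ : Finset (Obs n)) = Finset.univ.sigma fun _ => Finset.univ from rfl]
  rw [Finset.sum_sigma]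
  exact Finset.sum_congr rfl fun l _ => by simp [cRows, Matrix.mul_apply]

lemma inv_transpose_self {Ω q : Type*} [Fintype Ω] [Fintype q] [DecidableEq q]
    (Z : Matrix Ω q ℝ) : ((Zᵀ * Z)⁻¹)ᵀ = (Zᵀ * Z)⁻¹ := by
  rw [Matrix.transpose_nonsing_inv, Matrix.transpose_mul, Matrix.transpose_transpose]

lemma Hmat_one_mul_self {Ω q : Type*} [Fintype Ω] [Fintype q] [DecidableEq Ω] [DecidableEq q]
    (Z : Matrix Ω q ℝ) (h : IsUnit (Zᵀ * Z).det) : Hmat 1 Z * Z = Z := by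
  rw [Hmat_one]
  calc Z * (Zᵀ * Z)⁻¹ * Zᵀ * Z = Z * ((Zᵀ * Z)⁻¹ * (Zᵀ * Z)) := by
        simp only [Matrix.mul_assoc]
    _ = Z := by rw [Matrix.nonsing_inv_mul _ h, Matrix.mul_one]

lemma Hmat_one_transpose {Ω q : Type*} [Fintype Ω] [Fintype q] [DecidableEq Ω] [DecidableEq q]
    (Z : Matrix Ω q ℝ) : (Hmat 1 Z)ᵀ = Hmat 1 Z := by
  rw [Hmat_one, Matrix.transpose_mul, Matrix.transpose_mul, Matrix.transpose_transpose,
    inv_transpose_self]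
  simp only [Matrix.mul_assoc]

lemma Hmat_one_idem {Ω q : Type*} [Fintype Ω] [Fintype q] [DecidableEq Ω] [DecidableEq q]
    (Z : Matrix Ω q ℝ) (h : IsUnit (Zᵀ * Z).det) : Hmat 1 Z * Hmat 1 Z = Hmat 1 Z := by
  calc Hmat 1 Z * Hmat 1 Z = (Hmat 1 Z * Z) * ((Zᵀ * Z)⁻¹ * Zᵀ) := by
        rw [Hmat_one Z]; simp only [Matrix.mul_assoc]
    _ = Z * ((Zᵀ * Z)⁻¹ * Zᵀ) := by rw [Hmat_one_mul_self Z h]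
    _ = Hmat 1 Z := by rw [Hmat_one]; simp only [Matrix.mul_assoc]

end CR2Aux

/-- with identity working model and identity weights (`Φ = I`, `W = I`),
nested within-cluster fixed effects, and `L_i = ÜᵀÜ − Ü_iᵀÜ_i` invertible, the adjustment
matrices `A_i = (I − Ü_i (ÜᵀÜ)⁻¹ Ü_iᵀ)^{+1/2}` satisfy the CR2 criterion
`R̈_iᵀ A_i (I−H_X)_i (I−H_X)_iᵀ A_iᵀ R̈_i = R̈_iᵀ R̈_i`. -/
theorem cr2_criterion_identity_weights
    {m r s t : ℕ} {n : Fin m → ℕ}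
    (R : Matrix (Obs n) (Fin r) ℝ) (S : Matrix (Obs n) (Fin s) ℝ)
    (T : Matrix (Obs n) (Fin t) ℝ)
    (X : Matrix (Obs n) (Fin r ⊕ (Fin s ⊕ Fin t)) ℝ)
    (hX : X = Matrix.fromCols R (Matrix.fromCols S T))
    (U : Matrix (Obs n) (Fin r ⊕ Fin s) ℝ) (hU : U = Matrix.fromCols R S)
    (hfullrank : IsUnit (Xᵀ * X).det)
    (hnested : ∀ h k : Fin m, h ≠ k → cRows h T * (cRows k T)ᵀ = 0)
    -- absorbed matrices, with identity weights
    (Sd : Matrix (Obs n) (Fin s) ℝ) (hSd : Sd = (1 - Hmat 1 T) * S)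
    (Rd : Matrix (Obs n) (Fin r) ℝ)
    (hRd : Rd = (1 - Hmat 1 Sd) * ((1 - Hmat 1 T) * R))
    (Ud : Matrix (Obs n) (Fin r ⊕ Fin s) ℝ) (hUd : Ud = (1 - Hmat 1 T) * U)
    (hL : ∀ i : Fin m, IsUnit (Udᵀ * Ud - (cRows i Ud)ᵀ * cRows i Ud).det)
    -- C_i = I − Ü_i (ÜᵀÜ)⁻¹ Ü_iᵀ, with Moore–Penrose inverse Cp i
    (C : ∀ i : Fin m, Matrix (Fin (n i)) (Fin (n i)) ℝ)
    (hC : ∀ i, C i = 1 - cRows i Ud * (Udᵀ * Ud)⁻¹ * (cRows i Ud)ᵀ)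
    (Cp : ∀ i : Fin m, Matrix (Fin (n i)) (Fin (n i)) ℝ)
    (hCp1 : ∀ i, C i * Cp i * C i = C i)
    (hCp2 : ∀ i, Cp i * C i * Cp i = Cp i)
    (hCp3 : ∀ i, (C i * Cp i)ᵀ = C i * Cp i)
    (hCp4 : ∀ i, (Cp i * C i)ᵀ = Cp i * C i)
    -- A_i = C_i^{+1/2}, the symmetric psd square root of Cp i
    (A : ∀ i : Fin m, Matrix (Fin (n i)) (Fin (n i)) ℝ)
    (hA1 : ∀ i, (A i).PosSemidef)
    (hA2 : ∀ i, A i * A i = Cp i) :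
    ∀ i : Fin m,
      (cRows i Rd)ᵀ * A i * cRows i (1 - Hmat 1 X) *
          (cRows i (1 - Hmat 1 X))ᵀ * (A i)ᵀ * cRows i Rd
        = (cRows i Rd)ᵀ * cRows i Rd := by
  classical
  -- X is injective on vectors
  have hXinj : ∀ w : Fin r ⊕ (Fin s ⊕ Fin t) → ℝ, X *ᵥ w = 0 → w = 0 := by
    intro w hw
    have h1 : (Xᵀ * X) *ᵥ w = 0 := by
      rw [← Matrix.mulVec_mulVec, hw, Matrix.mulVec_zero]
    have h2 : ((Xᵀ * X)⁻¹ * (Xᵀ * X)) *ᵥ w = 0 := by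
      rw [← Matrix.mulVec_mulVec, h1, Matrix.mulVec_zero]
    rwa [Matrix.nonsing_inv_mul _ hfullrank, Matrix.one_mulVec] at h2
  -- T is injective on vectors
  have hTinj : ∀ v : Fin t → ℝ, T *ᵥ v = 0 → v = 0 := by
    intro v hv
    have hw : X *ᵥ (Sum.elim (0 : Fin r → ℝ) (Sum.elim (0 : Fin s → ℝ) v)) = 0 := by
      rw [hX, Matrix.fromCols_mulVec_sumElim, Matrix.fromCols_mulVec_sumElim]
      simp [hv]
    have h0 := hXinj _ hw
    funext k
    simpa using congrFun h0 (Sum.inr (Sum.inr k))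
  have hTT : IsUnit (Tᵀ * T).det := CR2Aux.isUnit_det_transpose_mul_self T hTinj
  have hMtTT : (Tᵀ * T)⁻¹ * (Tᵀ * T) = 1 := Matrix.nonsing_inv_mul _ hTT
  have hHTT : Hmat 1 T * T = T := CR2Aux.Hmat_one_mul_self T hTT
  have hHTs : (Hmat 1 T)ᵀ = Hmat 1 T := CR2Aux.Hmat_one_transpose T
  have h1HT_T : (1 - Hmat 1 T) * T = 0 := by
    rw [Matrix.sub_mul, Matrix.one_mul, hHTT, sub_self]
  have hUdT : Udᵀ * T = 0 := by
    rw [hUd, Matrix.transpose_mul, Matrix.mul_assoc]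
    have h2 : (1 - Hmat 1 T)ᵀ * T = 0 := by
      rw [Matrix.transpose_sub, Matrix.transpose_one, hHTs, h1HT_T]
    rw [h2, Matrix.mul_zero]
  have hTUd : Tᵀ * Ud = 0 := by
    have h := congrArg Matrix.transpose hUdT
    rw [Matrix.transpose_mul, Matrix.transpose_transpose, Matrix.transpose_zero] at h
    exact h
  have hUdeq : Ud = U - T * ((Tᵀ * T)⁻¹ * (Tᵀ * U)) := by
    rw [hUd, Matrix.sub_mul, Matrix.one_mul, CR2Aux.Hmat_one]
    simp only [Matrix.mul_assoc]
  -- Ud is injective on vectors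
  have hUdinj : ∀ v : Fin r ⊕ Fin s → ℝ, Ud *ᵥ v = 0 → v = 0 := by
    intro v hv
    have hXw : X *ᵥ (Sum.elim (fun a => v (Sum.inl a))
        (Sum.elim (fun b => v (Sum.inr b)) (-(((Tᵀ * T)⁻¹ * (Tᵀ * U)) *ᵥ v)))) = 0 := by
      rw [hX, Matrix.fromCols_mulVec_sumElim, Matrix.fromCols_mulVec_sumElim]
      have hUv : U *ᵥ v = R *ᵥ (fun a => v (Sum.inl a)) + S *ᵥ (fun b => v (Sum.inr b)) := by
        rw [hU]
        have hveq : v = Sum.elim (fun a => v (Sum.inl a)) (fun b => v (Sum.inr b)) := by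
          funext x; cases x <;> rfl
        conv_lhs => rw [hveq]
        rw [Matrix.fromCols_mulVec_sumElim]
      rw [Matrix.mulVec_neg, ← add_assoc, ← hUv, ← sub_eq_add_neg, Matrix.mulVec_mulVec,
        ← Matrix.sub_mulVec, ← hUdeq, hv]
    have h0 := hXinj _ hXw
    funext x
    cases x with
    | inl a => simpa using congrFun h0 (Sum.inl a)
    | inr b => simpa using congrFun h0 (Sum.inr (Sum.inl b))
  have hUU : IsUnit (Udᵀ * Ud).det := CR2Aux.isUnit_det_transpose_mul_self Ud hUdinj
  have hMuUU : (Udᵀ * Ud)⁻¹ * (Udᵀ * Ud) = 1 := Matrix.nonsing_inv_mul _ hUU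
  -- block-diagonal structure of the hat matrix of T, by nestedness
  have hTdiag : ∀ j k : Fin m, j ≠ k → cRows j T * (Tᵀ * T)⁻¹ * (cRows k T)ᵀ = 0 := by
    intro j k hjk
    have hTk : Tᵀ * T * (cRows k T)ᵀ = (cRows k T)ᵀ * (cRows k T * (cRows k T)ᵀ) := by
      rw [CR2Aux.transpose_mul_eq_sum T T, Matrix.sum_mul]
      rw [Finset.sum_eq_single_of_mem k (Finset.mem_univ k)]
      · rw [Matrix.mul_assoc]
      · intro l _ hlk
        rw [Matrix.mul_assoc, hnested l k hlk, Matrix.mul_zero]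
    have hMtTk : (Tᵀ * T)⁻¹ * (cRows k T)ᵀ * (cRows k T * (cRows k T)ᵀ) = (cRows k T)ᵀ := by
      calc (Tᵀ * T)⁻¹ * (cRows k T)ᵀ * (cRows k T * (cRows k T)ᵀ)
          = (Tᵀ * T)⁻¹ * ((cRows k T)ᵀ * (cRows k T * (cRows k T)ᵀ)) := by
            simp only [Matrix.mul_assoc]
        _ = (Tᵀ * T)⁻¹ * (Tᵀ * T * (cRows k T)ᵀ) := by rw [← hTk]
        _ = ((Tᵀ * T)⁻¹ * (Tᵀ * T)) * (cRows k T)ᵀ := by simp only [Matrix.mul_assoc]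
        _ = (cRows k T)ᵀ := by rw [hMtTT, Matrix.one_mul]
    have hFW : cRows j T * (Tᵀ * T)⁻¹ * (cRows k T)ᵀ * (cRows k T * (cRows k T)ᵀ) = 0 := by
      calc cRows j T * (Tᵀ * T)⁻¹ * (cRows k T)ᵀ * (cRows k T * (cRows k T)ᵀ)
          = cRows j T * ((Tᵀ * T)⁻¹ * (cRows k T)ᵀ * (cRows k T * (cRows k T)ᵀ)) := by
            simp only [Matrix.mul_assoc]
        _ = cRows j T * (cRows k T)ᵀ := by rw [hMtTk]
        _ = 0 := hnested j k hjk
    have hFTk : (cRows j T * (Tᵀ * T)⁻¹ * (cRows k T)ᵀ * cRows k T) *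
        (cRows j T * (Tᵀ * T)⁻¹ * (cRows k T)ᵀ * cRows k T)ᵀ = 0 := by
      calc (cRows j T * (Tᵀ * T)⁻¹ * (cRows k T)ᵀ * cRows k T) *
          (cRows j T * (Tᵀ * T)⁻¹ * (cRows k T)ᵀ * cRows k T)ᵀ
          = (cRows j T * (Tᵀ * T)⁻¹ * (cRows k T)ᵀ * (cRows k T * (cRows k T)ᵀ)) *
            (cRows j T * (Tᵀ * T)⁻¹ * (cRows k T)ᵀ)ᵀ := by
            rw [Matrix.transpose_mul]
            simp only [Matrix.mul_assoc]
        _ = 0 := by rw [hFW, Matrix.zero_mul]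
    have hFTk0 := CR2Aux.eq_zero_of_mul_transpose_self _ hFTk
    apply CR2Aux.eq_zero_of_mul_transpose_self
    calc (cRows j T * (Tᵀ * T)⁻¹ * (cRows k T)ᵀ) * (cRows j T * (Tᵀ * T)⁻¹ * (cRows k T)ᵀ)ᵀ
        = (cRows j T * (Tᵀ * T)⁻¹ * (cRows k T)ᵀ * cRows k T) *
          (((Tᵀ * T)⁻¹)ᵀ * (cRows j T)ᵀ) := by
          rw [Matrix.transpose_mul, Matrix.transpose_mul, Matrix.transpose_transpose]
          simp only [Matrix.mul_assoc]
      _ = 0 := by rw [hFTk0, Matrix.zero_mul]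
  -- the hat matrix of [Ud T]
  have hZZ : (Matrix.fromCols Ud T)ᵀ * Matrix.fromCols Ud T =
      Matrix.fromBlocks (Udᵀ * Ud) 0 0 (Tᵀ * T) := by
    rw [Matrix.transpose_fromCols, Matrix.fromRows_mul_fromCols, hUdT, hTUd]
  have hZZinv : ((Matrix.fromCols Ud T)ᵀ * Matrix.fromCols Ud T)⁻¹ =
      Matrix.fromBlocks (Udᵀ * Ud)⁻¹ 0 0 (Tᵀ * T)⁻¹ := by
    apply Matrix.inv_eq_right_inv
    rw [hZZ, Matrix.fromBlocks_multiply, Matrix.mul_nonsing_inv _ hUU,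
      Matrix.mul_nonsing_inv _ hTT]
    simp [Matrix.fromBlocks_one]
  have hHZ : Hmat 1 (Matrix.fromCols Ud T) =
      Ud * (Udᵀ * Ud)⁻¹ * Udᵀ + T * (Tᵀ * T)⁻¹ * Tᵀ := by
    rw [CR2Aux.Hmat_one, hZZinv, Matrix.transpose_fromCols,
      Matrix.fromCols_mul_fromBlocks, Matrix.fromCols_mul_fromRows,
      Matrix.mul_zero, Matrix.mul_zero, add_zero, zero_add]
  -- absorption identities
  have hHXX : Hmat 1 X * X = X := CR2Aux.Hmat_one_mul_self X hfullrank
  have hHXs : (Hmat 1 X)ᵀ = Hmat 1 X := CR2Aux.Hmat_one_transpose X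
  have hHXidem : Hmat 1 X * Hmat 1 X = Hmat 1 X := CR2Aux.Hmat_one_idem X hfullrank
  have hcols := hHXX
  nth_rewrite 2 3 [hX] at hcols
  rw [Matrix.mul_fromCols, Matrix.mul_fromCols, Matrix.fromCols_ext_iff] at hcols
  obtain ⟨hXR, hcols2⟩ := hcols
  rw [Matrix.fromCols_ext_iff] at hcols2
  obtain ⟨hXS, hXT⟩ := hcols2
  have hHXU : Hmat 1 X * U = U := by rw [hU, Matrix.mul_fromCols, hXR, hXS]
  have hHXUd : Hmat 1 X * Ud = Ud := by
    conv_lhs => rw [hUdeq]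
    rw [Matrix.mul_sub, hHXU, ← Matrix.mul_assoc, hXT, ← hUdeq]
  have hHXZ1 : Hmat 1 X * Matrix.fromCols Ud T = Matrix.fromCols Ud T := by
    rw [Matrix.mul_fromCols, hHXUd, hXT]
  have hHUT0 : Ud * (Udᵀ * Ud)⁻¹ * Udᵀ * T = 0 := by
    rw [Matrix.mul_assoc (Ud * (Udᵀ * Ud)⁻¹) Udᵀ T, hUdT, Matrix.mul_zero]
  have hHTUd0 : T * (Tᵀ * T)⁻¹ * Tᵀ * Ud = 0 := by
    rw [Matrix.mul_assoc (T * (Tᵀ * T)⁻¹) Tᵀ Ud, hTUd, Matrix.mul_zero]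
  have hTMtTT : T * (Tᵀ * T)⁻¹ * Tᵀ * T = T := by
    rw [← CR2Aux.Hmat_one T]; exact hHTT
  have hUMuUU : Ud * (Udᵀ * Ud)⁻¹ * Udᵀ * Ud = Ud := by
    rw [← CR2Aux.Hmat_one Ud]; exact CR2Aux.Hmat_one_mul_self Ud hUU
  have hHZT : Hmat 1 (Matrix.fromCols Ud T) * T = T := by
    rw [hHZ, Matrix.add_mul, hHUT0, hTMtTT, zero_add]
  have hHZUd : Hmat 1 (Matrix.fromCols Ud T) * Ud = Ud := by
    rw [hHZ, Matrix.add_mul, hHTUd0, hUMuUU, add_zero]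
  have hUeq : U = Ud + T * ((Tᵀ * T)⁻¹ * (Tᵀ * U)) := by rw [hUdeq, sub_add_cancel]
  have hHZU : Hmat 1 (Matrix.fromCols Ud T) * U = U := by
    conv_lhs => rw [hUeq]
    rw [Matrix.mul_add, hHZUd, ← Matrix.mul_assoc, hHZT, ← hUeq]
  have hZRS := hHZU
  rw [hU, Matrix.mul_fromCols, Matrix.fromCols_ext_iff] at hZRS
  obtain ⟨hZR, hZS⟩ := hZRS
  have hHZX : Hmat 1 (Matrix.fromCols Ud T) * X = X := by
    rw [hX, Matrix.mul_fromCols, Matrix.mul_fromCols, hZR, hZS, hHZT]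
  have hHXHZ : Hmat 1 X * Hmat 1 (Matrix.fromCols Ud T) =
      Hmat 1 (Matrix.fromCols Ud T) := by
    rw [CR2Aux.Hmat_one (Matrix.fromCols Ud T), ← Matrix.mul_assoc, ← Matrix.mul_assoc,
      hHXZ1]
  have hHZHX : Hmat 1 (Matrix.fromCols Ud T) * Hmat 1 X = Hmat 1 X := by
    rw [CR2Aux.Hmat_one X, ← Matrix.mul_assoc, ← Matrix.mul_assoc, hHZX]
  have hHXeq : Hmat 1 X = Hmat 1 (Matrix.fromCols Ud T) := by
    calc Hmat 1 X = Hmat 1 (Matrix.fromCols Ud T) * Hmat 1 X := hHZHX.symm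
      _ = ((Hmat 1 X)ᵀ * (Hmat 1 (Matrix.fromCols Ud T))ᵀ)ᵀ := by
          rw [← Matrix.transpose_mul, Matrix.transpose_transpose]
      _ = (Hmat 1 X * Hmat 1 (Matrix.fromCols Ud T))ᵀ := by
          rw [hHXs, CR2Aux.Hmat_one_transpose]
      _ = (Hmat 1 (Matrix.fromCols Ud T))ᵀ := by rw [hHXHZ]
      _ = Hmat 1 (Matrix.fromCols Ud T) := CR2Aux.Hmat_one_transpose _
  have hHXexp : Hmat 1 X = Ud * (Udᵀ * Ud)⁻¹ * Udᵀ + T * (Tᵀ * T)⁻¹ * Tᵀ :=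
    hHXeq.trans hHZ
  -- Rd lies in the column span of Ud
  have hUdcols : Ud = Matrix.fromCols ((1 - Hmat 1 T) * R) Sd := by
    rw [hUd, hU, Matrix.mul_fromCols, ← hSd]
  have hRdK : Rd = Ud * Matrix.fromRows (1 : Matrix (Fin r) (Fin r) ℝ)
      (-((Sdᵀ * Sd)⁻¹ * (Sdᵀ * ((1 - Hmat 1 T) * R)))) := by
    rw [hRd, Matrix.sub_mul, Matrix.one_mul, CR2Aux.Hmat_one Sd, hUdcols,
      Matrix.fromCols_mul_fromRows, Matrix.mul_one, Matrix.mul_neg, ← sub_eq_add_neg]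
    simp only [Matrix.mul_assoc]
  -- projection facts for 1 - H_X
  have hsymm1 : (1 - Hmat 1 X)ᵀ = 1 - Hmat 1 X := by
    rw [Matrix.transpose_sub, Matrix.transpose_one, hHXs]
  have hidem1 : (1 - Hmat 1 X) * (1 - Hmat 1 X) = 1 - Hmat 1 X := by
    rw [Matrix.mul_sub, Matrix.mul_one, Matrix.sub_mul, Matrix.one_mul, hHXidem]
    abel
  -- the per-cluster argument
  intro i
  have hAt : (A i)ᵀ = A i := by
    rw [← Matrix.conjTranspose_eq_transpose_of_trivial]
    exact (hA1 i).1
  have hCs : (C i)ᵀ = C i := by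
    rw [hC i, Matrix.transpose_sub, Matrix.transpose_one, Matrix.transpose_mul,
      Matrix.transpose_mul, Matrix.transpose_transpose, CR2Aux.inv_transpose_self]
    simp only [Matrix.mul_assoc]
  have hCps : (Cp i)ᵀ = Cp i := by
    rw [← hA2 i, Matrix.transpose_mul, hAt]
  have hCpC : Cp i * C i = C i * Cp i := by
    have h := hCp3 i
    rw [Matrix.transpose_mul, hCps, hCs] at h
    exact h
  have hCpQ : Cp i * (C i * Cp i) = Cp i := by rw [← Matrix.mul_assoc, hCp2 i]
  have hQCp : (C i * Cp i) * Cp i = Cp i := by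
    have h := congrArg Matrix.transpose hCpQ
    rw [Matrix.transpose_mul, hCp3 i, hCps] at h
    exact h
  -- Q A = A where Q = C Cp
  have hQA : C i * Cp i * A i = A i := by
    have hexp : (A i - C i * Cp i * A i) * (A i - C i * Cp i * A i)ᵀ = 0 := by
      rw [Matrix.transpose_sub, Matrix.transpose_mul, hAt, hCp3 i,
        Matrix.sub_mul, Matrix.mul_sub, Matrix.mul_sub]
      have e1 : A i * (A i * (C i * Cp i)) = Cp i := by
        rw [← Matrix.mul_assoc, hA2 i, hCpQ]
      have e2 : C i * Cp i * A i * A i = Cp i := by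
        rw [Matrix.mul_assoc (C i * Cp i), hA2 i, hQCp]
      have e3 : C i * Cp i * A i * (A i * (C i * Cp i)) = Cp i := by
        rw [← Matrix.mul_assoc, e2, hCpQ]
      rw [hA2 i, e1, e2, e3]
      abel
    have h0 := CR2Aux.eq_zero_of_mul_transpose_self _ hexp
    exact (sub_eq_zero.mp h0).symm
  have hAQ : A i * (C i * Cp i) = A i := by
    have h := congrArg Matrix.transpose hQA
    rw [Matrix.transpose_mul, hAt, hCp3 i] at h
    exact h
  -- A C A = C Cp
  have hPs : (A i * C i * A i)ᵀ = A i * C i * A i := by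
    rw [Matrix.transpose_mul, Matrix.transpose_mul, hAt, hCs]
    simp only [Matrix.mul_assoc]
  have hPP : (A i * C i * A i) * (A i * C i * A i) = A i * C i * A i := by
    calc (A i * C i * A i) * (A i * C i * A i)
        = A i * (C i * ((A i * A i) * (C i * A i))) := by simp only [Matrix.mul_assoc]
      _ = A i * (C i * (Cp i * (C i * A i))) := by rw [hA2 i]
      _ = A i * ((C i * Cp i * C i) * A i) := by simp only [Matrix.mul_assoc]
      _ = A i * C i * A i := by rw [hCp1 i]; simp only [Matrix.mul_assoc]
  have hQP : (C i * Cp i) * (A i * C i * A i) = A i * C i * A i := by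
    calc (C i * Cp i) * (A i * C i * A i)
        = (C i * Cp i * A i) * (C i * A i) := by simp only [Matrix.mul_assoc]
      _ = A i * C i * A i := by rw [hQA]; simp only [Matrix.mul_assoc]
  have hPQ : (A i * C i * A i) * (C i * Cp i) = A i * C i * A i := by
    have h := congrArg Matrix.transpose hQP
    rw [Matrix.transpose_mul, hPs, hCp3 i] at h
    exact h
  have hQQ : (C i * Cp i) * (C i * Cp i) = C i * Cp i := by
    calc (C i * Cp i) * (C i * Cp i) = (C i * Cp i * C i) * Cp i := by
          simp only [Matrix.mul_assoc]
      _ = C i * Cp i := by rw [hCp1 i]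
  have htr : (C i * Cp i - A i * C i * A i).trace = 0 := by
    rw [Matrix.trace_sub]
    have h2 : (A i * C i * A i).trace = (C i * Cp i).trace := by
      calc (A i * C i * A i).trace = (A i * (A i * C i)).trace :=
            Matrix.trace_mul_comm (A i * C i) (A i)
        _ = ((A i * A i) * C i).trace := by rw [← Matrix.mul_assoc]
        _ = (Cp i * C i).trace := by rw [hA2 i]
        _ = (C i * Cp i).trace := Matrix.trace_mul_comm (Cp i) (C i)
    rw [h2, sub_self]
  have hACA : A i * C i * A i = C i * Cp i := by
    have hE : C i * Cp i - A i * C i * A i = 0 := by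
      apply CR2Aux.eq_zero_of_symm_idem_trace_zero
      · rw [Matrix.transpose_sub, hCp3 i, hPs]
      · rw [Matrix.sub_mul, Matrix.mul_sub, Matrix.mul_sub, hQQ, hQP, hPQ, hPP]
        abel
      · exact htr
    exact (sub_eq_zero.mp hE).symm
  -- G = T_i Mt T_iᵀ facts
  have hGs : (cRows i T * (Tᵀ * T)⁻¹ * (cRows i T)ᵀ)ᵀ =
      cRows i T * (Tᵀ * T)⁻¹ * (cRows i T)ᵀ := by
    rw [Matrix.transpose_mul, Matrix.transpose_mul, Matrix.transpose_transpose,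
      CR2Aux.inv_transpose_self]
    simp only [Matrix.mul_assoc]
  have hsumUT : ∑ l, (cRows l Ud)ᵀ * cRows l T * ((Tᵀ * T)⁻¹ * (cRows i T)ᵀ) =
      (cRows i Ud)ᵀ * cRows i T * ((Tᵀ * T)⁻¹ * (cRows i T)ᵀ) := by
    apply Finset.sum_eq_single_of_mem i (Finset.mem_univ i)
    intro l _ hli
    calc (cRows l Ud)ᵀ * cRows l T * ((Tᵀ * T)⁻¹ * (cRows i T)ᵀ)
        = (cRows l Ud)ᵀ * (cRows l T * (Tᵀ * T)⁻¹ * (cRows i T)ᵀ) := by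
          simp only [Matrix.mul_assoc]
      _ = 0 := by rw [hTdiag l i hli, Matrix.mul_zero]
  have h00 : (cRows i Ud)ᵀ * cRows i T * ((Tᵀ * T)⁻¹ * (cRows i T)ᵀ) = 0 := by
    rw [← hsumUT, ← Matrix.sum_mul, ← CR2Aux.transpose_mul_eq_sum, hUdT, Matrix.zero_mul]
  have hUiG : (cRows i Ud)ᵀ * (cRows i T * (Tᵀ * T)⁻¹ * (cRows i T)ᵀ) = 0 := by
    simp only [Matrix.mul_assoc] at h00 ⊢
    exact h00
  have hGUdi : (cRows i T * (Tᵀ * T)⁻¹ * (cRows i T)ᵀ) * cRows i Ud = 0 := by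
    have h := congrArg Matrix.transpose hUiG
    rw [Matrix.transpose_mul, Matrix.transpose_transpose, Matrix.transpose_zero, hGs] at h
    exact h
  have hCG : C i * (cRows i T * (Tᵀ * T)⁻¹ * (cRows i T)ᵀ) =
      cRows i T * (Tᵀ * T)⁻¹ * (cRows i T)ᵀ := by
    rw [hC i, Matrix.sub_mul, Matrix.one_mul]
    have hz : cRows i Ud * (Udᵀ * Ud)⁻¹ * (cRows i Ud)ᵀ *
        (cRows i T * (Tᵀ * T)⁻¹ * (cRows i T)ᵀ) = 0 := by
      calc cRows i Ud * (Udᵀ * Ud)⁻¹ * (cRows i Ud)ᵀ *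
          (cRows i T * (Tᵀ * T)⁻¹ * (cRows i T)ᵀ)
          = cRows i Ud * (Udᵀ * Ud)⁻¹ *
            ((cRows i Ud)ᵀ * (cRows i T * (Tᵀ * T)⁻¹ * (cRows i T)ᵀ)) := by
            simp only [Matrix.mul_assoc]
        _ = 0 := by rw [hUiG, Matrix.mul_zero]
    rw [hz, sub_zero]
  have hQG : (C i * Cp i) * (cRows i T * (Tᵀ * T)⁻¹ * (cRows i T)ᵀ) =
      cRows i T * (Tᵀ * T)⁻¹ * (cRows i T)ᵀ := by
    calc (C i * Cp i) * (cRows i T * (Tᵀ * T)⁻¹ * (cRows i T)ᵀ)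
        = (C i * Cp i) * (C i * (cRows i T * (Tᵀ * T)⁻¹ * (cRows i T)ᵀ)) := by rw [hCG]
      _ = (C i * Cp i * C i) * (cRows i T * (Tᵀ * T)⁻¹ * (cRows i T)ᵀ) := by
          simp only [Matrix.mul_assoc]
      _ = C i * (cRows i T * (Tᵀ * T)⁻¹ * (cRows i T)ᵀ) := by rw [hCp1 i]
      _ = cRows i T * (Tᵀ * T)⁻¹ * (cRows i T)ᵀ := hCG
  have hCpG : Cp i * (cRows i T * (Tᵀ * T)⁻¹ * (cRows i T)ᵀ) =
      cRows i T * (Tᵀ * T)⁻¹ * (cRows i T)ᵀ := by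
    calc Cp i * (cRows i T * (Tᵀ * T)⁻¹ * (cRows i T)ᵀ)
        = Cp i * (C i * (cRows i T * (Tᵀ * T)⁻¹ * (cRows i T)ᵀ)) := by rw [hCG]
      _ = (Cp i * C i) * (cRows i T * (Tᵀ * T)⁻¹ * (cRows i T)ᵀ) := by
          simp only [Matrix.mul_assoc]
      _ = (C i * Cp i) * (cRows i T * (Tᵀ * T)⁻¹ * (cRows i T)ᵀ) := by rw [hCpC]
      _ = cRows i T * (Tᵀ * T)⁻¹ * (cRows i T)ᵀ := hQG
  have hAG : A i * (cRows i T * (Tᵀ * T)⁻¹ * (cRows i T)ᵀ) =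
      cRows i T * (Tᵀ * T)⁻¹ * (cRows i T)ᵀ := by
    have hneg : A i * (A i * (cRows i T * (Tᵀ * T)⁻¹ * (cRows i T)ᵀ) -
        cRows i T * (Tᵀ * T)⁻¹ * (cRows i T)ᵀ) =
        -(A i * (cRows i T * (Tᵀ * T)⁻¹ * (cRows i T)ᵀ) -
          cRows i T * (Tᵀ * T)⁻¹ * (cRows i T)ᵀ) := by
      rw [Matrix.mul_sub, ← Matrix.mul_assoc, hA2 i, hCpG, neg_sub]
    have h0 := CR2Aux.eq_zero_of_posSemidef_neg (A i) (hA1 i) _ hneg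
    exact sub_eq_zero.mp h0
  have hGA : (cRows i T * (Tᵀ * T)⁻¹ * (cRows i T)ᵀ) * A i =
      cRows i T * (Tᵀ * T)⁻¹ * (cRows i T)ᵀ := by
    have h := congrArg Matrix.transpose hAG
    rw [Matrix.transpose_mul, hAt, hGs] at h
    exact h
  -- Rd_i = Ud_i * K
  have hRdi : cRows i Rd = cRows i Ud * Matrix.fromRows (1 : Matrix (Fin r) (Fin r) ℝ)
      (-((Sdᵀ * Sd)⁻¹ * (Sdᵀ * ((1 - Hmat 1 T) * R)))) := by
    rw [hRdK, CR2Aux.cRows_mul]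
  have hGRd : (cRows i T * (Tᵀ * T)⁻¹ * (cRows i T)ᵀ) * cRows i Rd = 0 := by
    rw [hRdi, ← Matrix.mul_assoc, hGUdi, Matrix.zero_mul]
  -- C Cp Rd_i = Rd_i
  have hLinv : (Udᵀ * Ud - (cRows i Ud)ᵀ * cRows i Ud) *
      (Udᵀ * Ud - (cRows i Ud)ᵀ * cRows i Ud)⁻¹ = 1 := Matrix.mul_nonsing_inv _ (hL i)
  have hCUdi : C i * cRows i Ud = cRows i Ud *
      ((Udᵀ * Ud)⁻¹ * (Udᵀ * Ud - (cRows i Ud)ᵀ * cRows i Ud)) := by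
    rw [hC i, Matrix.sub_mul, Matrix.one_mul, Matrix.mul_sub, Matrix.mul_sub, hMuUU,
      Matrix.mul_one]
    simp only [Matrix.mul_assoc]
  have hUdiEq : (C i * cRows i Ud) *
      ((Udᵀ * Ud - (cRows i Ud)ᵀ * cRows i Ud)⁻¹ * (Udᵀ * Ud)) = cRows i Ud := by
    rw [hCUdi]
    calc cRows i Ud * ((Udᵀ * Ud)⁻¹ * (Udᵀ * Ud - (cRows i Ud)ᵀ * cRows i Ud)) *
        ((Udᵀ * Ud - (cRows i Ud)ᵀ * cRows i Ud)⁻¹ * (Udᵀ * Ud))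
        = cRows i Ud * ((Udᵀ * Ud)⁻¹ *
            (((Udᵀ * Ud - (cRows i Ud)ᵀ * cRows i Ud) *
              (Udᵀ * Ud - (cRows i Ud)ᵀ * cRows i Ud)⁻¹) * (Udᵀ * Ud))) := by
          simp only [Matrix.mul_assoc]
      _ = cRows i Ud := by rw [hLinv, Matrix.one_mul, hMuUU, Matrix.mul_one]
  have hCCpUdi : C i * (Cp i * cRows i Ud) = cRows i Ud := by
    have h' : C i * (Cp i * (C i * cRows i Ud *
        ((Udᵀ * Ud - (cRows i Ud)ᵀ * cRows i Ud)⁻¹ * (Udᵀ * Ud)))) = cRows i Ud := by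
      calc C i * (Cp i * (C i * cRows i Ud *
          ((Udᵀ * Ud - (cRows i Ud)ᵀ * cRows i Ud)⁻¹ * (Udᵀ * Ud))))
          = (C i * Cp i * C i) * (cRows i Ud *
            ((Udᵀ * Ud - (cRows i Ud)ᵀ * cRows i Ud)⁻¹ * (Udᵀ * Ud))) := by
            simp only [Matrix.mul_assoc]
        _ = C i * (cRows i Ud *
            ((Udᵀ * Ud - (cRows i Ud)ᵀ * cRows i Ud)⁻¹ * (Udᵀ * Ud))) := by rw [hCp1 i]
        _ = (C i * cRows i Ud) *
            ((Udᵀ * Ud - (cRows i Ud)ᵀ * cRows i Ud)⁻¹ * (Udᵀ * Ud)) := by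
            simp only [Matrix.mul_assoc]
        _ = cRows i Ud := hUdiEq
    conv_lhs => rw [← hUdiEq]
    exact h'
  have hCCpRdi : C i * (Cp i * cRows i Rd) = cRows i Rd := by
    rw [hRdi]
    calc C i * (Cp i * (cRows i Ud * Matrix.fromRows (1 : Matrix (Fin r) (Fin r) ℝ)
        (-((Sdᵀ * Sd)⁻¹ * (Sdᵀ * ((1 - Hmat 1 T) * R))))))
        = (C i * (Cp i * cRows i Ud)) * Matrix.fromRows (1 : Matrix (Fin r) (Fin r) ℝ)
          (-((Sdᵀ * Sd)⁻¹ * (Sdᵀ * ((1 - Hmat 1 T) * R)))) := by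
          simp only [Matrix.mul_assoc]
      _ = cRows i Ud * Matrix.fromRows (1 : Matrix (Fin r) (Fin r) ℝ)
          (-((Sdᵀ * Sd)⁻¹ * (Sdᵀ * ((1 - Hmat 1 T) * R)))) := by rw [hCCpUdi]
  -- the diagonal block of 1 - H_X
  have hblkHU : CR2Aux.blk i (Ud * (Udᵀ * Ud)⁻¹ * Udᵀ) =
      cRows i Ud * (Udᵀ * Ud)⁻¹ * (cRows i Ud)ᵀ := by
    rw [← CR2Aux.cRows_mul_transpose_cRows i (Ud * (Udᵀ * Ud)⁻¹) Ud, CR2Aux.cRows_mul]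
  have hblkHT : CR2Aux.blk i (T * (Tᵀ * T)⁻¹ * Tᵀ) =
      cRows i T * (Tᵀ * T)⁻¹ * (cRows i T)ᵀ := by
    rw [← CR2Aux.cRows_mul_transpose_cRows i (T * (Tᵀ * T)⁻¹) T, CR2Aux.cRows_mul]
  have hkey : cRows i (1 - Hmat 1 X) * (cRows i (1 - Hmat 1 X))ᵀ =
      C i - cRows i T * (Tᵀ * T)⁻¹ * (cRows i T)ᵀ := by
    rw [CR2Aux.cRows_mul_transpose_cRows, hsymm1, hidem1, hHXexp, sub_add_eq_sub_sub,
      CR2Aux.blk_sub, CR2Aux.blk_sub, CR2Aux.blk_one, hblkHU, hblkHT, hC i]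
  -- final computation
  have h1 : A i * (C i * (A i * cRows i Rd)) = cRows i Rd := by
    calc A i * (C i * (A i * cRows i Rd))
        = (A i * C i * A i) * cRows i Rd := by simp only [Matrix.mul_assoc]
      _ = (C i * Cp i) * cRows i Rd := by rw [hACA]
      _ = cRows i Rd := by rw [Matrix.mul_assoc]; exact hCCpRdi
  have h2 : A i * (cRows i T * (Tᵀ * T)⁻¹ * (cRows i T)ᵀ * (A i * cRows i Rd)) = 0 := by
    calc A i * (cRows i T * (Tᵀ * T)⁻¹ * (cRows i T)ᵀ * (A i * cRows i Rd))
        = (A i * (cRows i T * (Tᵀ * T)⁻¹ * (cRows i T)ᵀ)) * (A i * cRows i Rd) := by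
          simp only [Matrix.mul_assoc]
      _ = (cRows i T * (Tᵀ * T)⁻¹ * (cRows i T)ᵀ * A i) * cRows i Rd := by
          rw [hAG]; simp only [Matrix.mul_assoc]
      _ = (cRows i T * (Tᵀ * T)⁻¹ * (cRows i T)ᵀ) * cRows i Rd := by rw [hGA]
      _ = 0 := hGRd
  rw [hAt]
  calc (cRows i Rd)ᵀ * A i * cRows i (1 - Hmat 1 X) * (cRows i (1 - Hmat 1 X))ᵀ *
      A i * cRows i Rd
      = (cRows i Rd)ᵀ * (A i * ((cRows i (1 - Hmat 1 X) * (cRows i (1 - Hmat 1 X))ᵀ) *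
          (A i * cRows i Rd))) := by simp only [Matrix.mul_assoc]
    _ = (cRows i Rd)ᵀ * (A i * ((C i - cRows i T * (Tᵀ * T)⁻¹ * (cRows i T)ᵀ) *
          (A i * cRows i Rd))) := by rw [hkey]
    _ = (cRows i Rd)ᵀ * (A i * (C i * (A i * cRows i Rd)) -
          A i * (cRows i T * (Tᵀ * T)⁻¹ * (cRows i T)ᵀ * (A i * cRows i Rd))) := by
        rw [Matrix.sub_mul, Matrix.mul_sub]
    _ = (cRows i Rd)ᵀ * (cRows i Rd - 0) := by rw [h1, h2]
    _ = (cRows i Rd)ᵀ * cRows i Rd := by rw [sub_zero]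
end

section
/- Under the stated clustered-model assumptions with X = [U T], suppose the within-cluster fixed effects are nested (T_h T_k' = 0 for h ≠ k) and W = Φ^{-1}. Let D_i be invertible with D_i'D_i = Φ_i. Then the matrix B_i = D_i (I−H_X)_i Φ (I−H_X)_i' D_i' has the explicit form B_i = D_i (Φ_i − Ü_i M_Ü Ü_i' − T_i M_T T_i') D_i'. -/
open Matrix MeasureTheory

lemma conjT {a b : Type*} (M : Matrix a b ℝ) : Mᴴ = Mᵀ := by
  ext i j; simp [conjTranspose_apply]

lemma quadform {Ω q : Type*} [Fintype Ω] [Fintype q]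
    (W : Matrix Ω Ω ℝ) (Z : Matrix Ω q ℝ) (x : q → ℝ) :
    x ⬝ᵥ ((Zᵀ * W * Z) *ᵥ x) = (Z *ᵥ x) ⬝ᵥ (W *ᵥ (Z *ᵥ x)) := by
  rw [← Matrix.mulVec_mulVec, dotProduct_mulVec, ← vecMul_vecMul, vecMul_transpose,
    ← dotProduct_mulVec]

lemma posDef_ZtWZ {Ω q : Type*} [Fintype Ω] [Fintype q] [DecidableEq q]
    {W : Matrix Ω Ω ℝ} (hWpd : W.PosDef) (Z : Matrix Ω q ℝ)
    (hZ : ∀ x, Z *ᵥ x = 0 → x = 0) : (Zᵀ * W * Z).PosDef := by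
  have hw : Wᵀ = W := by rw [← conjT]; exact hWpd.isHermitian
  rw [posDef_iff_dotProduct_mulVec]
  constructor
  · rw [IsHermitian, conjT, transpose_mul, transpose_mul, transpose_transpose, hw,
      Matrix.mul_assoc]
  · intro x hx
    rw [star_trivial, quadform]
    have hne : Z *ᵥ x ≠ 0 := fun h => hx (hZ x h)
    simpa using hWpd.dotProduct_mulVec_pos hne

lemma bd_quad {m : ℕ} {n : Fin m → ℕ}
    (M : ∀ i : Fin m, Matrix (Fin (n i)) (Fin (n i)) ℝ) (x : (Σ i, Fin (n i)) → ℝ) :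
    x ⬝ᵥ (Matrix.blockDiagonal' M *ᵥ x)
      = ∑ i, (fun j => x ⟨i, j⟩) ⬝ᵥ (M i *ᵥ (fun j => x ⟨i, j⟩)) := by
  rw [dotProduct, ← Finset.univ_sigma_univ, Finset.sum_sigma]
  refine Finset.sum_congr rfl fun i _ => ?_
  rw [dotProduct]
  refine Finset.sum_congr rfl fun j _ => ?_
  congr 1
  rw [mulVec, dotProduct, ← Finset.univ_sigma_univ, Finset.sum_sigma, mulVec, dotProduct]
  rw [Finset.sum_eq_single i]
  · refine Finset.sum_congr rfl fun l _ => ?_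
    rw [blockDiagonal'_apply_eq]
  · intro k _ hk
    apply Finset.sum_eq_zero
    intro l _
    rw [blockDiagonal'_apply_ne _ _ _ (Ne.symm hk), zero_mul]
  · simp

lemma posDef_blockDiagonal' {m : ℕ} {n : Fin m → ℕ}
    (M : ∀ i : Fin m, Matrix (Fin (n i)) (Fin (n i)) ℝ) (hM : ∀ i, (M i).PosDef) :
    (Matrix.blockDiagonal' M).PosDef := by
  rw [posDef_iff_dotProduct_mulVec]
  constructor
  · rw [IsHermitian, conjT, blockDiagonal'_transpose]
    have h : (fun k => (M k)ᵀ) = M := funext fun i => by rw [← conjT]; exact (hM i).isHermitian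
    rw [h]
  · intro x hx
    rw [star_trivial, bd_quad]
    obtain ⟨⟨i0, j0⟩, hp⟩ := Function.ne_iff.mp hx
    apply Finset.sum_pos'
    · intro i _
      simpa using (hM i).posSemidef.dotProduct_mulVec_nonneg (fun j => x ⟨i, j⟩)
    · refine ⟨i0, Finset.mem_univ _, ?_⟩
      have hne : (fun j => x ⟨i0, j⟩) ≠ 0 := fun h => hp (by simpa using congrFun h j0)
      simpa using (hM i0).dotProduct_mulVec_pos hne

lemma cRows_mul {m : ℕ} {n : Fin m → ℕ} {c c' : Type*} [Fintype c] (i : Fin m)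
    (M : Matrix (Obs n) c ℝ) (N : Matrix c c' ℝ) :
    cRows i (M * N) = cRows i M * N := by
  ext j k; simp [cRows, Matrix.mul_apply]

lemma cRows_mul_transpose {m : ℕ} {n : Fin m → ℕ} {c : Type*} [Fintype c] (i : Fin m)
    (M N : Matrix (Obs n) c ℝ) :
    cRows i M * (cRows i N)ᵀ = Matrix.of fun j k => (M * Nᵀ) ⟨i, j⟩ ⟨i, k⟩ := by
  ext j k; simp [cRows, Matrix.mul_apply]

lemma fromRows_add' {m₁ m₂ q : Type*} (A C : Matrix m₁ q ℝ) (B D : Matrix m₂ q ℝ) :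
    Matrix.fromRows A B + Matrix.fromRows C D = Matrix.fromRows (A + C) (B + D) := by
  ext (_ | _) _ <;> simp

set_option maxHeartbeats 1000000 in
/-- with `X = [U T]`, nested within-cluster fixed effects and
`W = Φ⁻¹`, the matrix `B_i = D_i (I−H_X)_i Φ (I−H_X)_iᵀ D_iᵀ` has the explicit form
`B_i = D_i (Φ_i − Ü_i M_Ü Ü_iᵀ − T_i M_T T_iᵀ) D_iᵀ`. -/
theorem B_explicit_form
    {m u t : ℕ} {n : Fin m → ℕ}
    (Φb : ∀ i : Fin m, Matrix (Fin (n i)) (Fin (n i)) ℝ)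
    (hΦpd : ∀ i, (Φb i).PosDef)
    (Φ : Matrix (Obs n) (Obs n) ℝ) (hΦ : Φ = Matrix.blockDiagonal' Φb)
    (Wb : ∀ i : Fin m, Matrix (Fin (n i)) (Fin (n i)) ℝ)
    (hWb : ∀ i, Wb i = (Φb i)⁻¹)
    (W : Matrix (Obs n) (Obs n) ℝ) (hW : W = Matrix.blockDiagonal' Wb)
    (hWΦ : W = Φ⁻¹)
    (U : Matrix (Obs n) (Fin u) ℝ) (T : Matrix (Obs n) (Fin t) ℝ)
    (X : Matrix (Obs n) (Fin u ⊕ Fin t) ℝ) (hX : X = Matrix.fromCols U T)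
    (hfullrank : IsUnit (Xᵀ * W * X).det)
    (hnested : ∀ h k : Fin m, h ≠ k → cRows h T * (cRows k T)ᵀ = 0)
    (Ud : Matrix (Obs n) (Fin u) ℝ) (hUd : Ud = (1 - Hmat W T) * U)
    (D : ∀ i : Fin m, Matrix (Fin (n i)) (Fin (n i)) ℝ)
    (hDinv : ∀ i, IsUnit (D i).det)
    (hDD : ∀ i, (D i)ᵀ * D i = Φb i)
    (B : ∀ i : Fin m, Matrix (Fin (n i)) (Fin (n i)) ℝ)
    (hB : ∀ i, B i = D i * cRows i (1 - Hmat W X) * Φ *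
        (cRows i (1 - Hmat W X))ᵀ * (D i)ᵀ) :
    ∀ i : Fin m,
      B i = D i *
        (Φb i - cRows i Ud * Mmat W Ud * (cRows i Ud)ᵀ
          - cRows i T * Mmat W T * (cRows i T)ᵀ) * (D i)ᵀ := by
  -- basic facts
  have hWpd : W.PosDef := by
    rw [hW]; exact posDef_blockDiagonal' _ (fun i => by rw [hWb]; exact (hΦpd i).inv)
  have hWsym : Wᵀ = W := by rw [← conjT]; exact hWpd.isHermitian
  have hWΦ1 : W * Φ = 1 := by
    rw [hW, hΦ, ← Matrix.blockDiagonal'_mul]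
    have h : (fun i => Wb i * Φb i) = fun i : Fin m =>
        (1 : Matrix (Fin (n i)) (Fin (n i)) ℝ) := by
      funext i
      rw [hWb, Matrix.nonsing_inv_mul _ (isUnit_iff_ne_zero.mpr (hΦpd i).det_pos.ne')]
    rw [h]; exact Matrix.blockDiagonal'_one
  have hΦW1 : Φ * W = 1 := by
    rw [hW, hΦ, ← Matrix.blockDiagonal'_mul]
    have h : (fun i => Φb i * Wb i) = fun i : Fin m =>
        (1 : Matrix (Fin (n i)) (Fin (n i)) ℝ) := by
      funext i
      rw [hWb, Matrix.mul_nonsing_inv _ (isUnit_iff_ne_zero.mpr (hΦpd i).det_pos.ne')]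
    rw [h]; exact Matrix.blockDiagonal'_one
  -- injectivity
  have hXinj : ∀ v, X *ᵥ v = 0 → v = 0 := by
    intro v hv
    have h1 : ((Xᵀ * W * X)⁻¹ * (Xᵀ * W * X)) *ᵥ v = v := by
      rw [Matrix.nonsing_inv_mul _ hfullrank, Matrix.one_mulVec]
    rw [← h1, ← Matrix.mulVec_mulVec, ← Matrix.mulVec_mulVec, hv, Matrix.mulVec_zero,
      Matrix.mulVec_zero]
  have hTinj : ∀ x, T *ᵥ x = 0 → x = 0 := by
    intro x hx
    have h0 : X *ᵥ (Sum.elim 0 x) = 0 := by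
      rw [hX, fromCols_mulVec_sumElim, Matrix.mulVec_zero, hx, add_zero]
    funext j
    exact congrFun (hXinj _ h0) (Sum.inr j)
  have hCpd : (Tᵀ * W * T).PosDef := posDef_ZtWZ hWpd T hTinj
  have hCu : IsUnit (Tᵀ * W * T).det := isUnit_iff_ne_zero.mpr hCpd.det_pos.ne'
  have hCsym : (Tᵀ * W * T)ᵀ = Tᵀ * W * T := by rw [← conjT]; exact hCpd.isHermitian
  have hCisym : ((Tᵀ * W * T)⁻¹)ᵀ = (Tᵀ * W * T)⁻¹ := by
    rw [Matrix.transpose_nonsing_inv, hCsym]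
  -- Ud structure
  have hUd' : Ud = U + T * (-((Tᵀ * W * T)⁻¹ * (Tᵀ * (W * U)))) := by
    rw [hUd, Matrix.sub_mul, Matrix.one_mul, Hmat, Mmat, Matrix.mul_neg, ← sub_eq_add_neg]
    congr 1
    simp only [Matrix.mul_assoc]
  have hUdX : Ud = X * (Matrix.fromRows 1 (-((Tᵀ * W * T)⁻¹ * (Tᵀ * (W * U)))) :
      Matrix (Fin u ⊕ Fin t) (Fin u) ℝ) := by
    rw [hX, fromCols_mul_fromRows, Matrix.mul_one, hUd']
  have hTX : T = X * (Matrix.fromRows (0 : Matrix (Fin u) (Fin t) ℝ) 1 :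
      Matrix (Fin u ⊕ Fin t) (Fin t) ℝ) := by
    rw [hX, fromCols_mul_fromRows, Matrix.mul_zero, Matrix.mul_one, zero_add]
  have hUdinj : ∀ x, Ud *ᵥ x = 0 → x = 0 := by
    intro x hx
    rw [hUdX, ← Matrix.mulVec_mulVec] at hx
    have h1 := hXinj _ hx
    rw [fromRows_mulVec] at h1
    funext j
    have := congrFun h1 (Sum.inl j)
    simpa using this
  have hSpd : (Udᵀ * W * Ud).PosDef := posDef_ZtWZ hWpd Ud hUdinj
  have hSu : IsUnit (Udᵀ * W * Ud).det := isUnit_iff_ne_zero.mpr hSpd.det_pos.ne'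
  -- orthogonality facts
  have hTWUd : Tᵀ * W * Ud = 0 := by
    rw [hUd', Matrix.mul_add]
    have e : Tᵀ * W * (T * -((Tᵀ * W * T)⁻¹ * (Tᵀ * (W * U)))) = -(Tᵀ * W * U) := by
      calc Tᵀ * W * (T * -((Tᵀ * W * T)⁻¹ * (Tᵀ * (W * U))))
          = -((Tᵀ * W * T) * ((Tᵀ * W * T)⁻¹ * (Tᵀ * (W * U)))) := by
            simp only [Matrix.mul_neg, Matrix.mul_assoc]
        _ = -(Tᵀ * W * U) := by
            rw [Matrix.mul_nonsing_inv_cancel_left _ _ hCu]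
            simp only [Matrix.mul_assoc]
    rw [e, add_neg_cancel]
  have hUWUd : Uᵀ * W * Ud = Udᵀ * W * Ud := by
    symm
    nth_rewrite 1 [hUd']
    rw [transpose_add, transpose_mul, Matrix.add_mul, Matrix.add_mul]
    have e : (T * -((Tᵀ * W * T)⁻¹ * (Tᵀ * (W * U))))ᵀ * W * Ud = 0 := by
      rw [transpose_mul]
      calc (-((Tᵀ * W * T)⁻¹ * (Tᵀ * (W * U))))ᵀ * Tᵀ * W * Ud
          = (-((Tᵀ * W * T)⁻¹ * (Tᵀ * (W * U))))ᵀ * (Tᵀ * (W * Ud)) := by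
            simp only [Matrix.mul_assoc]
        _ = 0 := by
            rw [show Tᵀ * (W * Ud) = Tᵀ * W * Ud by rw [Matrix.mul_assoc], hTWUd,
              Matrix.mul_zero]
    rw [transpose_mul] at e
    rw [e, add_zero]
  have hXt : Xᵀ = Matrix.fromRows Uᵀ Tᵀ := by rw [hX, transpose_fromCols]
  have hXWUd : Xᵀ * W * Ud = Matrix.fromRows (Udᵀ * W * Ud) 0 := by
    rw [hXt, fromRows_mul, fromRows_mul, hTWUd, hUWUd]
  have hXWT : Xᵀ * W * T = Matrix.fromRows (Uᵀ * W * T) (Tᵀ * W * T) := by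
    rw [hXt, fromRows_mul, fromRows_mul]
  have hUdT : Udᵀ = Uᵀ + -(Uᵀ * (W * (T * ((Tᵀ * (W * T))⁻¹ * Tᵀ)))) := by
    have hCisym' : ((Tᵀ * (W * T))⁻¹)ᵀ = (Tᵀ * (W * T))⁻¹ := by
      simpa only [Matrix.mul_assoc] using hCisym
    simp only [hUd', transpose_add, transpose_mul, transpose_neg, Matrix.neg_mul,
      Matrix.mul_neg, hWsym, transpose_transpose, Matrix.mul_assoc, hCisym']
  have hGQ : Xᵀ * W * (Ud * (Udᵀ * W * Ud)⁻¹ * Udᵀ + T * (Tᵀ * W * T)⁻¹ * Tᵀ) = Xᵀ := by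
    rw [Matrix.mul_add]
    have t1 : Xᵀ * W * (Ud * (Udᵀ * W * Ud)⁻¹ * Udᵀ) = Matrix.fromRows Udᵀ 0 := by
      calc Xᵀ * W * (Ud * (Udᵀ * W * Ud)⁻¹ * Udᵀ)
          = (Xᵀ * W * Ud) * ((Udᵀ * W * Ud)⁻¹ * Udᵀ) := by simp only [Matrix.mul_assoc]
        _ = Matrix.fromRows ((Udᵀ * W * Ud) * ((Udᵀ * W * Ud)⁻¹ * Udᵀ))
              ((0 : Matrix (Fin t) (Fin u) ℝ) * ((Udᵀ * W * Ud)⁻¹ * Udᵀ)) := by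
            rw [hXWUd, fromRows_mul]
        _ = Matrix.fromRows Udᵀ 0 := by
            rw [Matrix.mul_nonsing_inv_cancel_left _ _ hSu, Matrix.zero_mul]
    have t2 : Xᵀ * W * (T * (Tᵀ * W * T)⁻¹ * Tᵀ) =
        Matrix.fromRows (Uᵀ * (W * (T * ((Tᵀ * (W * T))⁻¹ * Tᵀ)))) Tᵀ := by
      calc Xᵀ * W * (T * (Tᵀ * W * T)⁻¹ * Tᵀ)
          = (Xᵀ * W * T) * ((Tᵀ * W * T)⁻¹ * Tᵀ) := by simp only [Matrix.mul_assoc]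
        _ = Matrix.fromRows ((Uᵀ * W * T) * ((Tᵀ * W * T)⁻¹ * Tᵀ))
              ((Tᵀ * W * T) * ((Tᵀ * W * T)⁻¹ * Tᵀ)) := by rw [hXWT, fromRows_mul]
        _ = Matrix.fromRows (Uᵀ * (W * (T * ((Tᵀ * (W * T))⁻¹ * Tᵀ)))) Tᵀ := by
            rw [Matrix.mul_nonsing_inv_cancel_left _ _ hCu]
            congr 1
            simp only [Matrix.mul_assoc]
    rw [t1, t2, fromRows_add', hXt, zero_add]
    congr 1
    rw [hUdT, add_assoc, neg_add_cancel, add_zero]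
  obtain ⟨Q, hQ⟩ : ∃ Q : Matrix (Fin u ⊕ Fin t) (Fin u ⊕ Fin t) ℝ,
      Ud * (Udᵀ * W * Ud)⁻¹ * Udᵀ + T * (Tᵀ * W * T)⁻¹ * Tᵀ = X * (Q * Xᵀ) := by
    refine ⟨Matrix.fromRows (1 : Matrix (Fin u) (Fin u) ℝ)
        (-((Tᵀ * W * T)⁻¹ * (Tᵀ * (W * U)))) *
        ((Udᵀ * W * Ud)⁻¹ * (Matrix.fromRows (1 : Matrix (Fin u) (Fin u) ℝ)
          (-((Tᵀ * W * T)⁻¹ * (Tᵀ * (W * U)))))ᵀ) +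
      Matrix.fromRows (0 : Matrix (Fin u) (Fin t) ℝ) (1 : Matrix (Fin t) (Fin t) ℝ) *
        ((Tᵀ * W * T)⁻¹ * (Matrix.fromRows (0 : Matrix (Fin u) (Fin t) ℝ)
          (1 : Matrix (Fin t) (Fin t) ℝ))ᵀ), ?_⟩
    calc Ud * (Udᵀ * W * Ud)⁻¹ * Udᵀ + T * (Tᵀ * W * T)⁻¹ * Tᵀ
        = (X * (Matrix.fromRows (1 : Matrix (Fin u) (Fin u) ℝ)
              (-((Tᵀ * W * T)⁻¹ * (Tᵀ * (W * U)))) : Matrix (Fin u ⊕ Fin t) (Fin u) ℝ)) * (Udᵀ * W * Ud)⁻¹ *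
            (X * (Matrix.fromRows (1 : Matrix (Fin u) (Fin u) ℝ)
              (-((Tᵀ * W * T)⁻¹ * (Tᵀ * (W * U)))) : Matrix (Fin u ⊕ Fin t) (Fin u) ℝ))ᵀ +
          (X * (Matrix.fromRows (0 : Matrix (Fin u) (Fin t) ℝ)
              (1 : Matrix (Fin t) (Fin t) ℝ) : Matrix (Fin u ⊕ Fin t) (Fin t) ℝ)) * (Tᵀ * W * T)⁻¹ *
            (X * (Matrix.fromRows (0 : Matrix (Fin u) (Fin t) ℝ)
              (1 : Matrix (Fin t) (Fin t) ℝ) : Matrix (Fin u ⊕ Fin t) (Fin t) ℝ))ᵀ := by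
          rw [← hUdX, ← hTX]
      _ = _ := by
          simp only [transpose_mul, Matrix.add_mul, Matrix.mul_add, Matrix.mul_assoc]
  have h5 : (Xᵀ * W * X) * (Q * Xᵀ) = Xᵀ := by
    rw [show (Xᵀ * W * X) * (Q * Xᵀ) = Xᵀ * W * (X * (Q * Xᵀ)) by
      simp only [Matrix.mul_assoc], ← hQ, hGQ]
  have hFWL : X * ((Xᵀ * W * X)⁻¹ * Xᵀ) =
      Ud * (Udᵀ * W * Ud)⁻¹ * Udᵀ + T * (Tᵀ * W * T)⁻¹ * Tᵀ := by
    calc X * ((Xᵀ * W * X)⁻¹ * Xᵀ)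
        = X * ((Xᵀ * W * X)⁻¹ * ((Xᵀ * W * X) * (Q * Xᵀ))) := by rw [h5]
      _ = X * (Q * Xᵀ) := by rw [Matrix.nonsing_inv_mul_cancel_left _ _ hfullrank]
      _ = _ := hQ.symm
  have hGsym : (Xᵀ * W * X)ᵀ = Xᵀ * W * X := by rw [← conjT]; exact (posDef_ZtWZ hWpd X hXinj).isHermitian
  have hGisym : ((Xᵀ * W * X)⁻¹)ᵀ = (Xᵀ * W * X)⁻¹ := by
    rw [Matrix.transpose_nonsing_inv, hGsym]
  have hHxΦ : Hmat W X * Φ = X * ((Xᵀ * W * X)⁻¹ * Xᵀ) := by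
    rw [Hmat, Mmat]
    calc X * (Xᵀ * W * X)⁻¹ * Xᵀ * W * Φ
        = X * ((Xᵀ * W * X)⁻¹ * (Xᵀ * (W * Φ))) := by simp only [Matrix.mul_assoc]
      _ = X * ((Xᵀ * W * X)⁻¹ * Xᵀ) := by rw [hWΦ1, Matrix.mul_one]
  have hHxT : (Hmat W X)ᵀ = W * (X * ((Xᵀ * W * X)⁻¹ * Xᵀ)) := by
    have hGisym' : ((Xᵀ * (W * X))⁻¹)ᵀ = (Xᵀ * (W * X))⁻¹ := by
      simpa only [Matrix.mul_assoc] using hGisym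
    rw [Hmat, Mmat]
    simp only [transpose_mul, hWsym, hGisym', transpose_transpose, Matrix.mul_assoc]
  have hPWP : X * ((Xᵀ * W * X)⁻¹ * Xᵀ) * (W * (X * ((Xᵀ * W * X)⁻¹ * Xᵀ))) =
      X * ((Xᵀ * W * X)⁻¹ * Xᵀ) := by
    calc X * ((Xᵀ * W * X)⁻¹ * Xᵀ) * (W * (X * ((Xᵀ * W * X)⁻¹ * Xᵀ)))
        = X * ((Xᵀ * W * X)⁻¹ * ((Xᵀ * W * X) * ((Xᵀ * W * X)⁻¹ * Xᵀ))) := by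
          simp only [Matrix.mul_assoc]
      _ = X * ((Xᵀ * W * X)⁻¹ * Xᵀ) := by
          rw [Matrix.nonsing_inv_mul_cancel_left _ _ hfullrank]
  have hΦWP : Φ * (W * (X * ((Xᵀ * W * X)⁻¹ * Xᵀ))) = X * ((Xᵀ * W * X)⁻¹ * Xᵀ) := by
    rw [← Matrix.mul_assoc, hΦW1, Matrix.one_mul]
  have hmain : (1 - Hmat W X) * Φ * (1 - Hmat W X)ᵀ =
      Φ - Ud * (Udᵀ * W * Ud)⁻¹ * Udᵀ - T * (Tᵀ * W * T)⁻¹ * Tᵀ := by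
    have e1 : (1 - Hmat W X) * Φ = Φ - X * ((Xᵀ * W * X)⁻¹ * Xᵀ) := by
      rw [Matrix.sub_mul, Matrix.one_mul, hHxΦ]
    have e2 : (1 - Hmat W X)ᵀ = 1 - W * (X * ((Xᵀ * W * X)⁻¹ * Xᵀ)) := by
      rw [transpose_sub, transpose_one, hHxT]
    rw [e1, e2, Matrix.mul_sub, Matrix.mul_one, Matrix.sub_mul, hΦWP, hPWP, sub_self,
      sub_zero, hFWL, sub_add_eq_sub_sub]
  -- conclude per cluster
  intro i
  rw [hB i]
  have hL : cRows i (1 - Hmat W X) * Φ * (cRows i (1 - Hmat W X))ᵀ =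
      Φb i - cRows i Ud * Mmat W Ud * (cRows i Ud)ᵀ
        - cRows i T * Mmat W T * (cRows i T)ᵀ := by
    have r1 : cRows i Ud * Mmat W Ud * (cRows i Ud)ᵀ =
        Matrix.of fun j k => (Ud * (Udᵀ * W * Ud)⁻¹ * Udᵀ) ⟨i, j⟩ ⟨i, k⟩ := by
      rw [Mmat, ← cRows_mul, cRows_mul_transpose]
    have r2 : cRows i T * Mmat W T * (cRows i T)ᵀ =
        Matrix.of fun j k => (T * (Tᵀ * W * T)⁻¹ * Tᵀ) ⟨i, j⟩ ⟨i, k⟩ := by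
      rw [Mmat, ← cRows_mul, cRows_mul_transpose]
    rw [← cRows_mul, cRows_mul_transpose, hmain, r1, r2]
    ext j k
    simp [Matrix.sub_apply, hΦ, Matrix.blockDiagonal'_apply_eq]
  rw [Matrix.mul_assoc (D i) (cRows i (1 - Hmat W X)) Φ, Matrix.mul_assoc (D i), hL]
end

section
/- Under the stated clustered-model assumptions, suppose the within-cluster fixed effects are nested (T_h T_k' = 0 for h ≠ k) and T has full column rank, with M_T = (T'WT)^{-1}. Then for every cluster i, T_i M_T (M_T − M_T T_i' W_i T_i M_T)^+ M_T T_i' = 0. -/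
open Matrix MeasureTheory

lemma sum_decomp {m t : ℕ} {n : Fin m → ℕ} (Wb : ∀ i : Fin m, Matrix (Fin (n i)) (Fin (n i)) ℝ)
    (T : Matrix (Obs n) (Fin t) ℝ) :
    Tᵀ * Matrix.blockDiagonal' Wb * T = ∑ k : Fin m, (cRows k T)ᵀ * Wb k * cRows k T := by
  ext a b
  rw [Matrix.sum_apply]
  simp only [Matrix.mul_apply, Matrix.transpose_apply, cRows, Matrix.of_apply]
  rw [← Finset.univ_sigma_univ, Finset.sum_sigma]
  refine Finset.sum_congr rfl fun k _ => ?_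
  refine Finset.sum_congr rfl fun j' _ => ?_
  congr 1
  rw [Finset.sum_sigma]
  rw [Finset.sum_eq_single k]
  · exact Finset.sum_congr rfl fun j _ => by rw [Matrix.blockDiagonal'_apply_eq]
  · intro h _ hh
    refine Finset.sum_eq_zero fun j _ => ?_
    rw [Matrix.blockDiagonal'_apply_ne _ _ _ hh, mul_zero]
  · intro h; exact absurd (Finset.mem_univ k) h

lemma zero_of_posdef {α β : Type*} [Fintype α] [Fintype β]
    (Wi : Matrix β β ℝ) (hWi : Wi.PosDef) (X : Matrix α β ℝ)
    (h : X * Wi * Xᵀ = 0) : X = 0 := by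
  ext r c
  by_contra hc
  have hrow : X r ≠ 0 := fun h0 => hc (by rw [h0]; rfl)
  have hpos := hWi.dotProduct_mulVec_pos hrow
  rw [star_trivial] at hpos
  have : (X * Wi * Xᵀ) r r = X r ⬝ᵥ Wi *ᵥ X r := by
    simp only [Matrix.mul_apply, dotProduct, Matrix.mulVec, Matrix.transpose_apply,
      Finset.sum_mul, Finset.mul_sum, mul_assoc]
    exact Finset.sum_comm
  rw [h] at this
  simp only [Matrix.zero_apply] at this
  rw [← this] at hpos
  exact lt_irrefl 0 hpos

/-- with nested within-cluster fixed effects `T` of full column rank,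
`T_i M_T (M_T − M_T T_iᵀ W_i T_i M_T)⁺ M_T T_iᵀ = 0` for every cluster `i`. -/
theorem nested_fixed_effects_pinv_vanishes
    {m t : ℕ} {n : Fin m → ℕ}
    (Wb : ∀ i : Fin m, Matrix (Fin (n i)) (Fin (n i)) ℝ)
    (hWpd : ∀ i, (Wb i).PosDef)
    (W : Matrix (Obs n) (Obs n) ℝ) (hW : W = Matrix.blockDiagonal' Wb)
    (T : Matrix (Obs n) (Fin t) ℝ)
    (hfullrank : IsUnit (Tᵀ * W * T).det)
    (hnested : ∀ h k : Fin m, h ≠ k → cRows h T * (cRows k T)ᵀ = 0)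
    -- E_i = M_T − M_T T_iᵀ W_i T_i M_T and its Moore–Penrose inverse G i
    (E : ∀ i : Fin m, Matrix (Fin t) (Fin t) ℝ)
    (hE : ∀ i, E i = Mmat W T - Mmat W T * (cRows i T)ᵀ * Wb i * cRows i T * Mmat W T)
    (G : ∀ i : Fin m, Matrix (Fin t) (Fin t) ℝ)
    (hG1 : ∀ i, E i * G i * E i = E i)
    (hG2 : ∀ i, G i * E i * G i = G i)
    (hG3 : ∀ i, (E i * G i)ᵀ = E i * G i)
    (hG4 : ∀ i, (G i * E i)ᵀ = G i * E i) :
    ∀ i : Fin m, cRows i T * Mmat W T * G i * Mmat W T * (cRows i T)ᵀ = 0 := by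
  intro i
  have hWbs : (Wb i)ᵀ = Wb i := by
    have h := (hWpd i).1
    simpa [Matrix.IsHermitian, Matrix.conjTranspose_eq_transpose_of_trivial] using h
  set A := Tᵀ * W * T with hA
  set Mm := Mmat W T with hM
  have hMm : Mm = A⁻¹ := rfl
  set Ti := cRows i T with hTi
  set Ai := Tiᵀ * Wb i * Ti with hAi
  have hMA : Mm * A = 1 := by rw [hMm]; exact Matrix.nonsing_inv_mul A hfullrank
  have hAM : A * Mm = 1 := by rw [hMm]; exact Matrix.mul_nonsing_inv A hfullrank
  have hAisymm : Aiᵀ = Ai := by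
    rw [hAi, Matrix.transpose_mul, Matrix.transpose_mul, Matrix.transpose_transpose, hWbs,
      Matrix.mul_assoc]
  -- A * Ai = Ai * Ai and Ai * A = Ai * Ai
  have hAAi : A * Ai = Ai * Ai := by
    rw [hA, hW, sum_decomp, Finset.sum_mul, Finset.sum_eq_single i]
    · intro k _ hk
      have h0 : cRows k T * Tiᵀ = 0 := hnested k i hk
      have : (cRows k T)ᵀ * Wb k * cRows k T * Ai
          = (cRows k T)ᵀ * Wb k * ((cRows k T * Tiᵀ) * (Wb i * Ti)) := by
        rw [hAi]; simp only [Matrix.mul_assoc]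
      rw [this, h0, Matrix.zero_mul, Matrix.mul_zero]
    · intro h; exact absurd (Finset.mem_univ i) h
  have hAiA : Ai * A = Ai * Ai := by
    rw [hA, hW, sum_decomp, Finset.mul_sum, Finset.sum_eq_single i]
    · intro k _ hk
      have h0 : Ti * (cRows k T)ᵀ = 0 := hnested i k (fun h => hk h.symm)
      have : Ai * ((cRows k T)ᵀ * Wb k * cRows k T)
          = Tiᵀ * Wb i * ((Ti * (cRows k T)ᵀ) * (Wb k * cRows k T)) := by
        rw [hAi]; simp only [Matrix.mul_assoc]
      rw [this, h0, Matrix.zero_mul, Matrix.mul_zero]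
    · intro h; exact absurd (Finset.mem_univ i) h
  -- Mm commutes with Ai
  have hMAi : Mm * Ai = Ai * Mm := by
    calc Mm * Ai = Mm * Ai * (A * Mm) := by rw [hAM, Matrix.mul_one]
    _ = Mm * (Ai * A) * Mm := by simp only [Matrix.mul_assoc]
    _ = Mm * (A * Ai) * Mm := by rw [hAiA, hAAi]
    _ = (Mm * A) * (Ai * Mm) := by simp only [Matrix.mul_assoc]
    _ = Ai * Mm := by rw [hMA, Matrix.one_mul]
  -- key idempotent-type identity
  have hkey : Mm * Ai * (Mm * Ai) = Mm * Ai := by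
    calc Mm * Ai * (Mm * Ai) = Mm * Ai * (Ai * Mm) := by rw [hMAi]
    _ = Mm * (Ai * A) * Mm := by rw [hAiA]; simp only [Matrix.mul_assoc]
    _ = (Mm * Ai) * (A * Mm) := by simp only [Matrix.mul_assoc]
    _ = Mm * Ai := by rw [hAM, Matrix.mul_one]
  have hE' : E i = Mm - Mm * Ai * Mm := by
    rw [hE i, hAi]; simp only [Matrix.mul_assoc, hM, hTi]
  -- Ai * E i = 0
  have hAiE : Ai * E i = 0 := by
    rw [hE', Matrix.mul_sub]
    have : Ai * (Mm * Ai * Mm) = Ai * Mm := by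
      calc Ai * (Mm * Ai * Mm) = (Ai * Mm) * (Ai * Mm) := by simp only [Matrix.mul_assoc]
      _ = (Mm * Ai) * (Mm * Ai) := by rw [← hMAi]
      _ = Mm * Ai := hkey
      _ = Ai * Mm := hMAi
    rw [this, sub_self]
  -- G i * Ai = 0
  have hGAi : G i * Ai = 0 := by
    have hEt : (E i)ᵀ * Ai = 0 := by
      have := congrArg Matrix.transpose hAiE
      rwa [Matrix.transpose_mul, hAisymm, Matrix.transpose_zero] at this
    calc G i * Ai = G i * E i * G i * Ai := by rw [hG2]
    _ = G i * ((E i * G i)ᵀ * Ai) := by rw [hG3]; simp only [Matrix.mul_assoc]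
    _ = G i * ((G i)ᵀ * ((E i)ᵀ * Ai)) := by rw [Matrix.transpose_mul]; simp only [Matrix.mul_assoc]
    _ = 0 := by rw [hEt, Matrix.mul_zero, Matrix.mul_zero]
  -- X = G i * Mm * Tiᵀ is zero
  have hX : G i * Mm * Tiᵀ = 0 := by
    apply zero_of_posdef (Wb i) (hWpd i)
    have h1 : G i * (Mm * Ai) = 0 := by
      rw [hMAi, ← Matrix.mul_assoc, hGAi, Matrix.zero_mul]
    calc G i * Mm * Tiᵀ * Wb i * (G i * Mm * Tiᵀ)ᵀ
        = (G i * Mm * Tiᵀ * Wb i * Ti) * (Mmᵀ * (G i)ᵀ) := by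
          simp only [Matrix.transpose_mul, Matrix.transpose_transpose, Matrix.mul_assoc]
    _ = (G i * (Mm * Ai)) * (Mmᵀ * (G i)ᵀ) := by rw [hAi]; simp only [Matrix.mul_assoc]
    _ = 0 := by rw [h1, Matrix.zero_mul]
  calc Ti * Mm * G i * Mm * Tiᵀ = Ti * Mm * (G i * Mm * Tiᵀ) := by
        simp only [Matrix.mul_assoc]
  _ = 0 := by rw [hX, Matrix.mul_zero]
end

section
/- Under the stated clustered-model assumptions with identity working model and identity weights (Φ = I and W = I), suppose that for cluster i the matrix I_i − X_i M_X X_i' is invertible, and set A_i = (I_i − X_i M_X X_i')^{-1/2}, its inverse symmetric square root. Then A_i satisfies the original bias-reduced-linearization criterion: A_i (I−H_X)_i (I−H_X)_i' A_i' = I_i. -/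
open Matrix MeasureTheory

/-- with identity working model and identity weights, if
`I_i − X_i M_X X_iᵀ` is invertible and `A_i` is its inverse symmetric square root, then
`A_i (I−H_X)_i (I−H_X)_iᵀ A_iᵀ = I_i`: the original bias-reduced-linearization
criterion holds. -/
theorem brl_criterion_identity_working_model
    {m p : ℕ} {n : Fin m → ℕ}
    (X : Matrix (Obs n) (Fin p) ℝ)
    (hfullrank : IsUnit (Xᵀ * X).det)
    -- M_X = (XᵀX)⁻¹ and H_X = X M_X Xᵀ (identity weights)
    (MX : Matrix (Fin p) (Fin p) ℝ) (hMX : MX = (Xᵀ * X)⁻¹)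
    (H : Matrix (Obs n) (Obs n) ℝ) (hH : H = X * MX * Xᵀ)
    -- C_i = I_i − X_i M_X X_iᵀ is assumed invertible
    (C : ∀ i : Fin m, Matrix (Fin (n i)) (Fin (n i)) ℝ)
    (hC : ∀ i, C i = 1 - cRows i X * MX * (cRows i X)ᵀ)
    (hCinv : ∀ i, IsUnit (C i).det)
    -- A_i = C_i^{-1/2}: the (positive definite) inverse of the symmetric positive
    -- definite square root of C_i, i.e. the positive definite matrix with A_i² = C_i⁻¹
    (A : ∀ i : Fin m, Matrix (Fin (n i)) (Fin (n i)) ℝ)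
    (hApd : ∀ i, (A i).PosDef)
    (hAA : ∀ i, A i * A i = (C i)⁻¹) :
    ∀ i : Fin m,
      A i * cRows i (1 - H) * (cRows i (1 - H))ᵀ * (A i)ᵀ = 1 := by
  intro i
  have hMXsymm : MXᵀ = MX := by
    rw [hMX, Matrix.transpose_nonsing_inv, Matrix.transpose_mul, Matrix.transpose_transpose]
  have hHsymm : Hᵀ = H := by
    rw [hH]; simp [Matrix.transpose_mul, Matrix.mul_assoc, hMXsymm]
  have hMXmul : MX * (Xᵀ * X) = 1 := by
    rw [hMX]; exact Matrix.nonsing_inv_mul _ hfullrank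
  have hHidem : H * H = H := by
    rw [hH]
    calc X * MX * Xᵀ * (X * MX * Xᵀ)
        = X * ((MX * (Xᵀ * X)) * (MX * Xᵀ)) := by simp only [Matrix.mul_assoc]
      _ = X * MX * Xᵀ := by rw [hMXmul, Matrix.one_mul, ← Matrix.mul_assoc]
  have h1 : (1 - H) * (1 - H)ᵀ = 1 - H := by
    rw [Matrix.transpose_sub, Matrix.transpose_one, hHsymm,
      Matrix.sub_mul, Matrix.mul_sub, Matrix.mul_sub, hHidem]
    simp
  have hblock : cRows i (1 - H) * (cRows i (1 - H))ᵀ = C i := by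
    ext j k
    have e1 : (cRows i (1 - H) * (cRows i (1 - H))ᵀ
          : Matrix (Fin (n i)) (Fin (n i)) ℝ) j k
        = ((1 - H) * (1 - H)ᵀ : Matrix (Obs n) (Obs n) ℝ) ⟨i, j⟩ ⟨i, k⟩ := by
      simp only [Matrix.mul_apply, cRows, Matrix.of_apply, Matrix.transpose_apply]
    rw [e1, h1, hC i, hH]
    simp only [Matrix.sub_apply, Matrix.one_apply, Matrix.mul_apply, cRows,
      Matrix.transpose_apply, Matrix.of_apply]
    congr 1
    by_cases hjk : j = k
    · simp [hjk]
    · rw [if_neg hjk, if_neg]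
      simp [Sigma.mk.inj_iff, hjk]
  have hAsymm : (A i)ᵀ = A i := by
    have := (hApd i).isHermitian
    simpa [Matrix.IsHermitian, Matrix.conjTranspose_eq_transpose_of_trivial] using this
  have hAunit : IsUnit (A i).det := isUnit_iff_ne_zero.mpr (ne_of_gt (hApd i).det_pos)
  have hCeq : C i = (A i * A i)⁻¹ := by
    rw [hAA i, Matrix.nonsing_inv_nonsing_inv _ (hCinv i)]
  rw [hAsymm, Matrix.mul_assoc (A i) (cRows i (1 - H)) ((cRows i (1 - H))ᵀ), hblock,
    hCeq, Matrix.mul_inv_rev]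
  calc A i * ((A i)⁻¹ * (A i)⁻¹) * A i
      = (A i * (A i)⁻¹) * ((A i)⁻¹ * A i) := by simp only [Matrix.mul_assoc]
    _ = 1 := by rw [Matrix.mul_nonsing_inv _ hAunit, Matrix.nonsing_inv_mul _ hAunit, Matrix.one_mul]
end
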